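/- arXiv:2012.13652 — 5 statements merged into one kernel-verified Lean document; each statement's English description precedes it below -/
import Mathlib

section
/- Every pair of distinct, non-antipodal points a, b ∈ S^d determines exactly one lune L (intersection of two distinct non-opposite closed hemispheres) such that a and b are the centers of the two (d−1)-dimensional hemispheres bounding L. -/
open Set Metric
open scoped RealInnerProductSpace

noncomputable section

/-- Euclidean space `E^{d+1}`. -/
abbrev E (d : ℕ) := EuclideanSpace ℝ (Fin (d + 1))

/-- The unit sphere `S^d ⊆ E^{d+1}`. -/
def Sph (d : ℕ) : Set (E d) := Metric.sphere (0 : E d) 1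

variable {d : ℕ}

/-- Geodesic (angular) distance on the unit sphere. -/
def sdist (x y : E d) : ℝ := Real.arccos ⟪x, y⟫

/-- Closed hemisphere with center `p`. -/
def Hemi (p : E d) : Set (E d) := {x ∈ Sph d | 0 ≤ ⟪p, x⟫}

/-- Open hemisphere with center `p`. -/
def openHemi (p : E d) : Set (E d) := {x ∈ Sph d | 0 < ⟪p, x⟫}

/-- Boundary great subsphere of the hemisphere with center `p`. -/
def bdHemi (p : E d) : Set (E d) := {x ∈ Sph d | ⟪p, x⟫ = 0}

/-- Spherical convexity: no antipodal pairs, and the nonnegative cone over the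
set is convex (equivalent to being closed under shorter arcs). -/
def SphConvex (C : Set (E d)) : Prop :=
  (∀ x ∈ C, -x ∉ C) ∧ Convex ℝ {v : E d | ∃ r : ℝ, 0 ≤ r ∧ ∃ x ∈ C, v = r • x}

/-- Spherical convex hull: the smallest spherically convex subset of the
sphere containing `A`. -/
def sConvHull (A : Set (E d)) : Set (E d) := ⋂₀ {C | SphConvex C ∧ C ⊆ Sph d ∧ A ⊆ C}

/-- Interior of `C` relative to the sphere. -/
def sInterior (C : Set (E d)) : Set (E d) :=
  {x ∈ Sph d | ∃ ε > 0, Metric.ball x ε ∩ Sph d ⊆ C}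

/-- A spherical convex body: closed, spherically convex, with nonempty
interior relative to the sphere. -/
def IsBody (C : Set (E d)) : Prop :=
  C ⊆ Sph d ∧ IsClosed C ∧ SphConvex C ∧ (sInterior C).Nonempty

/-- Spherical ball of radius `r` centered at `p`. -/
def sBall (p : E d) (r : ℝ) : Set (E d) := {x ∈ Sph d | sdist p x ≤ r}

/-- Normalization of a vector. -/
def nrm (v : E d) : E d := ‖v‖⁻¹ • v

/-- The center of the `(d-1)`-dimensional hemisphere `bd(G) ∩ H`, where `G`, `H`
are the hemispheres centered at `g`, `h`. -/
def cGH (g h : E d) : E d := nrm (h - ⟪g, h⟫ • g)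

/-- Thickness of the lune `Hemi g ∩ Hemi h`: the geodesic distance between the
centers of its two bounding `(d-1)`-dimensional hemispheres. -/
def lthick (g h : E d) : ℝ := Real.pi - sdist g h

/-- The hemisphere centered at `k` supports `C`. -/
def Supports (k : E d) (C : Set (E d)) : Prop :=
  C ⊆ Hemi k ∧ (bdHemi k ∩ C).Nonempty

/-- Width of `C` determined by a supporting hemisphere centered at `k`:
minimal thickness of a lune `K ∩ K*` over supporting hemispheres `K* ≠ K`. -/
def width (C : Set (E d)) (k : E d) : ℝ :=
  sInf {w | ∃ k' ∈ Sph d, k' ≠ k ∧ k' ≠ -k ∧ Supports k' C ∧ w = lthick k k'}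

/-- Thickness of `C`: minimal thickness of a lune containing `C`. -/
def thick (C : Set (E d)) : ℝ :=
  sInf {w | ∃ g ∈ Sph d, ∃ h ∈ Sph d, g ≠ h ∧ g ≠ -h ∧
    C ⊆ Hemi g ∩ Hemi h ∧ w = lthick g h}

/-- Spherical diameter of a set. -/
def sdiam (C : Set (E d)) : ℝ := sSup {r | ∃ x ∈ C, ∃ y ∈ C, r = sdist x y}

/-- Reduced spherical convex body. -/
def Reduced (R : Set (E d)) : Prop :=
  IsBody R ∧ ∀ Z : Set (E d), IsBody Z → Z ⊆ R → Z ≠ R → thick Z < thick R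

/-- Extreme point of a spherical convex body. -/
def ExtremePt (C : Set (E d)) (e : E d) : Prop := e ∈ C ∧ SphConvex (C \ {e})


section Stmt3Aux
variable {d : ℕ}

lemma norm_perp {a b : E d} (ha : ‖a‖ = 1) (hb : ‖b‖ = 1) :
    ‖b - ⟪a,b⟫ • a‖ ^ 2 = 1 - ⟪a,b⟫ ^ 2 := by
  rw [norm_sub_sq_real, real_inner_smul_right, real_inner_comm a b, norm_smul, ha, hb]
  rw [Real.norm_eq_abs, mul_one, sq_abs]; ring

lemma inner_abs_lt {a b : E d} (ha : ‖a‖ = 1) (hb : ‖b‖ = 1)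
    (hab : a ≠ b) (hnap : a ≠ -b) : |⟪a, b⟫| < 1 := by
  rcases lt_or_eq_of_le (abs_real_inner_le_norm a b) with h | h
  · simpa [ha, hb] using h
  · rw [ha, hb, mul_one] at h
    rcases abs_eq (by norm_num : (0:ℝ) ≤ 1) |>.mp h with h1 | h1
    · exact absurd ((inner_eq_one_iff_of_norm_eq_one ha hb).mp h1) hab
    · have : ⟪a, -b⟫ = 1 := by rw [inner_neg_right]; linarith
      exact absurd ((inner_eq_one_iff_of_norm_eq_one ha (by simp [hb])).mp this) hnap

lemma norm_perp' {a b : E d} (ha : ‖a‖ = 1) (hb : ‖b‖ = 1) :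
    ‖b - ⟪a,b⟫ • a‖ = Real.sqrt (1 - ⟪a,b⟫ ^ 2) := by
  rw [← norm_perp ha hb, Real.sqrt_sq (norm_nonneg _)]

lemma sigma_pos {a b : E d} (ha : ‖a‖ = 1) (hb : ‖b‖ = 1)
    (hab : a ≠ b) (hnap : a ≠ -b) : 0 < Real.sqrt (1 - ⟪a,b⟫ ^ 2) := by
  have := inner_abs_lt ha hb hab hnap
  apply Real.sqrt_pos.mpr; nlinarith [abs_nonneg ⟪a,b⟫, sq_abs ⟪a,b⟫]

lemma solve_g {a b g h : E d} (hg : ‖g‖ = 1) (hh : ‖h‖ = 1) (hgh : g ≠ h) (hgh' : g ≠ -h)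
    (hA : cGH g h = a) (hB : cGH h g = b) :
    g = (Real.sqrt (1 - ⟪a,b⟫ ^ 2))⁻¹ • (b - ⟪a,b⟫ • a) := by
  obtain ⟨s, hs⟩ : ∃ s, ⟪g,h⟫ = s := ⟨_, rfl⟩
  have hs2 : ⟪h, g⟫ = s := by rw [← hs]; exact real_inner_comm g h
  obtain ⟨σ, hσ⟩ : ∃ σ, Real.sqrt (1 - s ^ 2) = σ := ⟨_, rfl⟩
  have hσpos : 0 < σ := by rw [← hσ, ← hs]; exact sigma_pos hg hh hgh hgh'
  have habs : |s| < 1 := by rw [← hs]; exact inner_abs_lt hg hh hgh hgh'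
  have hσ2 : σ * σ = 1 - s ^ 2 := by
    rw [← hσ]
    exact Real.mul_self_sqrt (by nlinarith [abs_nonneg s, sq_abs s])
  have hnu : ‖h - s • g‖ = σ := by
    have := norm_perp' hg hh; rw [hs] at this; rw [this, hσ]
  have hnv : ‖g - s • h‖ = σ := by
    have := norm_perp' hh hg; rw [hs2] at this; rw [this, hσ]
  have hA' : a = σ⁻¹ • (h - s • g) := by rw [← hA]; unfold cGH nrm; rw [hs, hnu]
  have hB' : b = σ⁻¹ • (g - s • h) := by rw [← hB]; unfold cGH nrm; rw [hs2, hnv]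
  have hne : (1 : ℝ) - s ^ 2 ≠ 0 := by nlinarith [hσ2, hσpos]
  have hts : ⟪a, b⟫ = -s := by
    rw [hA', hB', real_inner_smul_left, real_inner_smul_right,
      inner_sub_left, inner_sub_right, inner_sub_right, real_inner_smul_left,
      real_inner_smul_left, real_inner_smul_right, real_inner_smul_right,
      real_inner_self_eq_norm_sq, real_inner_self_eq_norm_sq, hg, hh, hs, hs2]
    field_simp
    linear_combination s * hσ2
  have key : g = σ⁻¹ • (b + s • a) := by
    rw [hA', hB']
    match_scalars <;> field_simp <;> linarith [hσ2]
  rw [key, hts]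
  congr 1
  · rw [← hσ]; congr 1; ring
  · rw [neg_smul, sub_neg_eq_add]

-- existence side
lemma exist_g {a b : E d} (ha : ‖a‖ = 1) (hb : ‖b‖ = 1)
    (hab : a ≠ b) (hnap : a ≠ -b) :
    cGH ((Real.sqrt (1 - ⟪a,b⟫ ^ 2))⁻¹ • (b - ⟪a,b⟫ • a))
        ((Real.sqrt (1 - ⟪a,b⟫ ^ 2))⁻¹ • (a - ⟪a,b⟫ • b)) = a := by
  obtain ⟨t, ht⟩ : ∃ t, ⟪a,b⟫ = t := ⟨_, rfl⟩
  have ht2 : ⟪b, a⟫ = t := by rw [← ht]; exact real_inner_comm a b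
  obtain ⟨σ, hσ⟩ : ∃ σ, Real.sqrt (1 - t ^ 2) = σ := ⟨_, rfl⟩
  have hσpos : 0 < σ := by rw [← hσ, ← ht]; exact sigma_pos ha hb hab hnap
  have habs : |t| < 1 := by rw [← ht]; exact inner_abs_lt ha hb hab hnap
  have hσ2 : σ * σ = 1 - t ^ 2 := by
    rw [← hσ]; exact Real.mul_self_sqrt (by nlinarith [abs_nonneg t, sq_abs t])
  rw [ht, hσ]
  have hip : ⟪σ⁻¹ • (b - t • a), σ⁻¹ • (a - t • b)⟫ = -t := by
    rw [real_inner_smul_left, real_inner_smul_right,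
      inner_sub_left, inner_sub_right, inner_sub_right, real_inner_smul_left,
      real_inner_smul_left, real_inner_smul_right, real_inner_smul_right,
      real_inner_self_eq_norm_sq, real_inner_self_eq_norm_sq, ha, hb, ht, ht2]
    field_simp
    linear_combination t * hσ2
  unfold cGH
  rw [hip]
  have hσ2' : σ ^ 2 = 1 - t ^ 2 := by rw [sq]; exact hσ2
  have hvec : σ⁻¹ • (a - t • b) - (-t) • σ⁻¹ • (b - t • a) = σ • a := by
    match_scalars <;> field_simp <;> linarith [hσ2']
  rw [hvec]
  unfold nrm
  rw [norm_smul, ha, Real.norm_eq_abs, abs_of_pos hσpos, mul_one, smul_smul,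
    inv_mul_cancel₀ (ne_of_gt hσpos), one_smul]

lemma norm_g {a b : E d} (ha : ‖a‖ = 1) (hb : ‖b‖ = 1)
    (hab : a ≠ b) (hnap : a ≠ -b) :
    ‖(Real.sqrt (1 - ⟪a,b⟫ ^ 2))⁻¹ • (b - ⟪a,b⟫ • a)‖ = 1 := by
  rw [norm_smul, norm_perp' ha hb, Real.norm_eq_abs,
    abs_of_pos (by simpa using inv_pos.mpr (sigma_pos ha hb hab hnap)),
    inv_mul_cancel₀ (ne_of_gt (sigma_pos ha hb hab hnap))]

end Stmt3Aux

/-- every pair of distinct non-antipodal points `a, b ∈ S^d`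
determines exactly one lune such that `a` and `b` are the centers of the two
`(d-1)`-dimensional hemispheres bounding it. -/
theorem stmt3 {d : ℕ} (a b : E d) (ha : a ∈ Sph d) (hb : b ∈ Sph d)
    (hab : a ≠ b) (hnap : b ≠ -a) :
    ∃! L : Set (E d), ∃ g ∈ Sph d, ∃ h ∈ Sph d, g ≠ h ∧ g ≠ -h ∧
      L = Hemi g ∩ Hemi h ∧ cGH g h = a ∧ cGH h g = b := by
  have ha' : ‖a‖ = 1 := by simpa [Sph, mem_sphere_zero_iff_norm] using ha
  have hb' : ‖b‖ = 1 := by simpa [Sph, mem_sphere_zero_iff_norm] using hb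
  have hnap' : a ≠ -b := fun e => hnap (by rw [e]; simp)
  have hcomm : ⟪b, a⟫ = ⟪a, b⟫ := real_inner_comm a b
  obtain ⟨t, ht⟩ : ∃ t, ⟪a,b⟫ = t := ⟨_, rfl⟩
  obtain ⟨σ, hσ⟩ : ∃ σ, Real.sqrt (1 - t ^ 2) = σ := ⟨_, rfl⟩
  have habs : |t| < 1 := by rw [← ht]; exact inner_abs_lt ha' hb' hab hnap'
  have hσpos : 0 < σ := by rw [← hσ, ← ht]; exact sigma_pos ha' hb' hab hnap'
  set g0 : E d := σ⁻¹ • (b - t • a) with hg0def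
  set h0 : E d := σ⁻¹ • (a - t • b) with hh0def
  have hg0form : g0 = (Real.sqrt (1 - ⟪a,b⟫ ^ 2))⁻¹ • (b - ⟪a,b⟫ • a) := by
    rw [ht, hσ]
  have hh0form : h0 = (Real.sqrt (1 - ⟪b,a⟫ ^ 2))⁻¹ • (a - ⟪b,a⟫ • b) := by
    rw [hcomm, ht, hσ]
  have hg0n : ‖g0‖ = 1 := by rw [hg0form]; exact norm_g ha' hb' hab hnap'
  have hh0n : ‖h0‖ = 1 := by
    rw [hh0form]
    exact norm_g hb' ha' (Ne.symm hab) hnap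
  have hg0S : g0 ∈ Sph d := by
    simpa [Sph, mem_sphere_zero_iff_norm] using hg0n
  have hh0S : h0 ∈ Sph d := by
    simpa [Sph, mem_sphere_zero_iff_norm] using hh0n
  have hσinv : (σ⁻¹ : ℝ) ≠ 0 := inv_ne_zero (ne_of_gt hσpos)
  have hne1 : g0 ≠ h0 := by
    intro e
    have e' : (b - t • a) = (a - t • b) :=
      smul_right_injective (E d) hσinv e
    have e2 : (1 + t) • (b - a) = (0 : E d) := by
      linear_combination (norm := module) e'
    rcases smul_eq_zero.mp e2 with h1 | h1
    · have : (0:ℝ) < 1 + t := by cases abs_lt.mp habs; linarith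
      linarith [this, h1.le, h1.ge]
    · exact hab (sub_eq_zero.mp h1).symm
  have hne2 : g0 ≠ -h0 := by
    intro e
    have e' : (b - t • a) = -(a - t • b) := by
      apply smul_right_injective (E d) hσinv
      show σ⁻¹ • (b - t • a) = σ⁻¹ • -(a - t • b)
      rw [smul_neg, ← hh0def, ← hg0def]; exact e
    have e2 : (1 - t) • (b + a) = (0 : E d) := by
      linear_combination (norm := module) e'
    rcases smul_eq_zero.mp e2 with h1 | h1
    · have : (0:ℝ) < 1 - t := by cases abs_lt.mp habs; linarith
      linarith [this, h1.le, h1.ge]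
    · exact hnap (neg_eq_of_add_eq_zero_left h1).symm
  have hg0form' : g0 = (Real.sqrt (1 - ⟪b,a⟫ ^ 2))⁻¹ • (b - ⟪b,a⟫ • a) := by
    rw [hcomm]; exact hg0form
  have hh0form' : h0 = (Real.sqrt (1 - ⟪a,b⟫ ^ 2))⁻¹ • (a - ⟪a,b⟫ • b) := by
    rw [← hcomm]; exact hh0form
  have hcg : cGH g0 h0 = a := by
    rw [hg0form, hh0form']
    exact exist_g ha' hb' hab hnap'
  have hch : cGH h0 g0 = b := by
    rw [hg0form', hh0form]
    exact exist_g hb' ha' (Ne.symm hab) hnap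
  refine ⟨Hemi g0 ∩ Hemi h0,
    ⟨g0, hg0S, h0, hh0S, hne1, hne2, rfl, hcg, hch⟩, ?_⟩
  rintro L ⟨g, hgS, h, hhS, hgh, hgh', rfl, hA, hB⟩
  have hg' : ‖g‖ = 1 := by simpa [Sph, mem_sphere_zero_iff_norm] using hgS
  have hh' : ‖h‖ = 1 := by simpa [Sph, mem_sphere_zero_iff_norm] using hhS
  have hhg' : h ≠ -g := fun e => hgh' (by rw [e]; simp)
  have hgeq : g = g0 := by
    rw [hg0form]; exact solve_g hg' hh' hgh hgh' hA hB
  have hheq : h = h0 := by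
    rw [hh0form]; exact solve_g hh' hg' (Ne.symm hgh) hhg' hB hA
  rw [hgeq, hheq]
end
end

section
/- Let L = H ∩ G be a lune on S^d with thickness Δ(L), and let c be the center of the bounding hemisphere G/H and c' the center of H/G. For any point x of G/H with x ≠ c: if Δ(L) < π/2 then dist(x, c') > dist(c, c'); if Δ(L) = π/2 then dist(x, c') = dist(c, c'); if Δ(L) > π/2 then dist(x, c') < dist(c, c'). -/
open Set Metric
open scoped RealInnerProductSpace

noncomputable section

variable {d : ℕ}

set_option maxHeartbeats 1000000 in
/-- comparison of distances from points of a bounding hemisphere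
of a lune to the center of the other bounding hemisphere, according to the
thickness of the lune. -/
theorem stmt4 {d : ℕ} (g h : E d) (hg : g ∈ Sph d) (hh : h ∈ Sph d)
    (hne : g ≠ h) (hno : g ≠ -h)
    (x : E d) (hx : x ∈ bdHemi g ∩ Hemi h) (hxc : x ≠ cGH g h) :
    (lthick g h < Real.pi / 2 →
        sdist x (cGH h g) > sdist (cGH g h) (cGH h g)) ∧
    (lthick g h = Real.pi / 2 →
        sdist x (cGH h g) = sdist (cGH g h) (cGH h g)) ∧
    (lthick g h > Real.pi / 2 →
        sdist x (cGH h g) < sdist (cGH g h) (cGH h g)) := by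
  classical
  have hg1 : ‖g‖ = 1 := by simpa [Sph] using hg
  have hh1 : ‖h‖ = 1 := by simpa [Sph] using hh
  obtain ⟨⟨hxS, hgx⟩, _, hhx⟩ := hx
  have hx1 : ‖x‖ = 1 := by simpa [Sph] using hxS
  set t : ℝ := ⟪g, h⟫ with ht
  have ht1 : t < 1 := (inner_lt_one_iff_real_of_norm_eq_one hg1 hh1).2 hne
  have ht2 : -1 < t := by
    have hnh : ‖-h‖ = 1 := by simpa using hh1
    have := (inner_lt_one_iff_real_of_norm_eq_one hg1 hnh).2 hno
    rw [inner_neg_right] at this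
    linarith
  have hden : (0:ℝ) < 1 - t ^ 2 := by nlinarith
  set r : ℝ := Real.sqrt (1 - t ^ 2) with hrdef
  have hr2 : r ^ 2 = 1 - t ^ 2 := Real.sq_sqrt hden.le
  have hrpos : 0 < r := Real.sqrt_pos.2 hden
  set u : E d := h - t • g with hu
  set v : E d := g - t • h with hv
  have hgg : ⟪g, g⟫ = (1:ℝ) := by
    rw [real_inner_self_eq_norm_sq, hg1]; norm_num
  have hhh : ⟪h, h⟫ = (1:ℝ) := by
    rw [real_inner_self_eq_norm_sq, hh1]; norm_num
  have hhg : ⟪h, g⟫ = t := (real_inner_comm h g).symm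
  have hnu : ‖u‖ = r := by
    have h2 : ‖u‖ ^ 2 = 1 - t ^ 2 := by
      rw [← real_inner_self_eq_norm_sq]
      simp only [hu, inner_sub_left, inner_sub_right, real_inner_smul_left,
        real_inner_smul_right, hgg, hhh, hhg, ← ht]
      ring
    rw [← Real.sqrt_sq (norm_nonneg u), h2]
  have hnv : ‖v‖ = r := by
    have h2 : ‖v‖ ^ 2 = 1 - t ^ 2 := by
      rw [← real_inner_self_eq_norm_sq]
      simp only [hv, inner_sub_left, inner_sub_right, real_inner_smul_left,
        real_inner_smul_right, hgg, hhh, hhg, ← ht]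
      ring
    rw [← Real.sqrt_sq (norm_nonneg v), h2]
  have hcu : cGH g h = ‖u‖⁻¹ • u := by rw [cGH, nrm, ← ht, ← hu]
  have hcv : cGH h g = ‖v‖⁻¹ • v := by rw [cGH, nrm, hhg, ← hv]
  set a : ℝ := ⟪h, x⟫ with ha
  have hxh : ⟪x, h⟫ = a := (real_inner_comm x h).symm
  have hxg : ⟪x, g⟫ = (0:ℝ) := by rw [real_inner_comm]; exact hgx
  have hxu : ⟪x, u⟫ = a := by
    simp only [hu, inner_sub_right, real_inner_smul_right, hxg, hxh]
    ring
  have hxv : ⟪x, v⟫ = -(t * a) := by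
    simp only [hv, inner_sub_right, real_inner_smul_right, hxg, hxh]
    ring
  have huv : ⟪u, v⟫ = -(t * (1 - t ^ 2)) := by
    simp only [hu, hv, inner_sub_left, inner_sub_right, real_inner_smul_left,
      real_inner_smul_right, hgg, hhh, hhg, ← ht]
    ring
  set s : ℝ := r⁻¹ * a with hs
  have hxc' : ⟪x, cGH h g⟫ = -(t * s) := by
    rw [hcv, real_inner_smul_right, hxv, hnv, hs]; ring
  have hrne : r ≠ 0 := hrpos.ne'
  have hcc' : ⟪cGH g h, cGH h g⟫ = -t := by
    rw [hcu, hcv, real_inner_smul_left, real_inner_smul_right, huv, hnu, hnv, ← hr2]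
    have hx2 : r⁻¹ * r = 1 := inv_mul_cancel₀ hrne
    calc r⁻¹ * (r⁻¹ * -(t * r ^ 2)) = -t * ((r⁻¹ * r) * (r⁻¹ * r)) := by ring
      _ = -t := by rw [hx2]; ring
  have hxcgh : ⟪x, cGH g h⟫ = s := by
    rw [hcu, real_inner_smul_right, hxu, hnu, hs]
  have hs0 : 0 ≤ s := mul_nonneg (inv_nonneg.2 hrpos.le) hhx
  have hc1 : ‖cGH g h‖ = 1 := by
    rw [hcu, norm_smul, norm_inv, norm_norm, hnu]
    exact inv_mul_cancel₀ hrne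
  have hs1 : s < 1 := by
    have h2 := (inner_lt_one_iff_real_of_norm_eq_one hx1 hc1).2 hxc
    rwa [hxcgh] at h2
  have hb1 : -(t * s) ∈ Set.Icc (-1 : ℝ) 1 := by
    constructor <;> nlinarith
  have hb2 : -t ∈ Set.Icc (-1 : ℝ) 1 := by
    constructor <;> linarith
  have hlth : lthick g h = Real.pi - Real.arccos t := by
    rw [lthick, sdist, ← ht]
  have hsd1 : sdist x (cGH h g) = Real.arccos (-(t * s)) := by
    rw [sdist, hxc']
  have hsd2 : sdist (cGH g h) (cGH h g) = Real.arccos (-t) := by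
    rw [sdist, hcc']
  refine ⟨?_, ?_, ?_⟩
  · intro hlt
    have htneg : t < 0 := by
      by_contra hc
      push_neg at hc
      have := Real.arccos_le_pi_div_two.2 hc
      rw [hlth] at hlt
      linarith
    have hlt' : -(t * s) < -t := by nlinarith
    have := Real.strictAntiOn_arccos hb1 hb2 hlt'
    rw [hsd1, hsd2]
    exact this
  · intro heq
    have ht0 : t = 0 := by
      rw [hlth] at heq
      have h2 : Real.arccos t = Real.pi / 2 := by linarith
      exact Real.arccos_eq_pi_div_two.1 h2
    rw [hsd1, hsd2, ht0]
    norm_num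
  · intro hgt
    have htpos : 0 < t := by
      by_contra hc
      push_neg at hc
      have h2 : Real.pi / 2 ≤ Real.arccos t := by
        by_contra hc2
        push_neg at hc2
        have := Real.arccos_lt_pi_div_two.1 hc2
        linarith
      rw [hlth] at hgt
      linarith
    have hlt' : -t < -(t * s) := by nlinarith
    have := Real.strictAntiOn_arccos hb2 hb1 hlt'
    rw [hsd1, hsd2]
    exact this
end
end

section
/- Let C ⊂ S^d be a spherically convex body with diam(C) ≤ π/2, and suppose diam(C) = dist(a,b) for some a, b ∈ C. Let L be the unique lune such that a and b are the centers of the two (d−1)-dimensional hemispheres bounding L. Then C ⊆ L. -/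
open Set Metric
open scoped RealInnerProductSpace

noncomputable section

variable {d : ℕ}

set_option maxHeartbeats 1000000

/-- a convex body of diameter at most `π/2` is contained in the
lune whose bounding hemisphere centers are a diametral pair of the body. -/
theorem stmt6 {d : ℕ} (C : Set (E d)) (hC : IsBody C)
    (hdiam : sdiam C ≤ Real.pi / 2)
    (a b : E d) (haC : a ∈ C) (hbC : b ∈ C) (hab : sdist a b = sdiam C)
    (g h : E d) (hg : g ∈ Sph d) (hh : h ∈ Sph d) (hne : g ≠ h) (hno : g ≠ -h)
    (hca : cGH g h = a) (hcb : cGH h g = b) :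
    C ⊆ Hemi g ∩ Hemi h := by
  obtain ⟨hCS, hcl, hconv, hint⟩ := hC
  intro x hx
  have hxS : x ∈ Sph d := hCS hx
  have haS : a ∈ Sph d := hCS haC
  have hbS : b ∈ Sph d := hCS hbC
  have norm1 : ∀ y : E d, y ∈ Sph d → ‖y‖ = 1 := by
    intro y hy; simpa [Sph] using hy
  have hg1 := norm1 g hg
  have hh1 := norm1 h hh
  have hx1 := norm1 x hxS
  have ha1 := norm1 a haS
  have hb1 := norm1 b hbS
  set t : ℝ := ⟪g, h⟫ with ht
  have habs : |t| ≤ 1 := by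
    have h0 := abs_real_inner_le_norm g h
    rw [hg1, hh1, mul_one] at h0
    exact h0
  have htne1 : t ≠ 1 := fun h1 =>
    hne ((inner_eq_one_iff_of_norm_eq_one hg1 hh1).mp h1)
  have htnem1 : t ≠ -1 := by
    intro h1
    have hn : ‖(-h : E d)‖ = 1 := by rw [norm_neg]; exact hh1
    have h2 : ⟪g, (-h : E d)⟫ = (1:ℝ) := by
      rw [inner_neg_right, ← ht, h1]; norm_num
    exact hno ((inner_eq_one_iff_of_norm_eq_one hg1 hn).mp h2)
  have habslt : |t| < 1 := lt_of_le_of_ne habs (by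
    intro h1
    rcases (abs_eq (le_of_lt one_pos)).mp h1 with h2 | h2
    · exact htne1 h2
    · exact htnem1 h2)
  have ht2 : t ^ 2 < 1 := by
    rw [sq_lt_one_iff_abs_lt_one]; exact habslt
  have hgg : ⟪g, g⟫ = (1:ℝ) := by
    rw [real_inner_self_eq_norm_sq, hg1]; norm_num
  have hhh : ⟪h, h⟫ = (1:ℝ) := by
    rw [real_inner_self_eq_norm_sq, hh1]; norm_num
  have hhg : ⟪h, g⟫ = t := (real_inner_comm g h).trans ht.symm
  set s : ℝ := Real.sqrt (1 - t ^ 2) with hs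
  have hspos : 0 < s := Real.sqrt_pos.mpr (by linarith)
  have hs2 : s ^ 2 = 1 - t ^ 2 := Real.sq_sqrt (by linarith)
  have hiA : ⟪h - t • g, h - t • g⟫ = 1 - t ^ 2 := by
    rw [inner_sub_left, inner_sub_right, inner_sub_right, real_inner_smul_left,
      real_inner_smul_left, real_inner_smul_right, real_inner_smul_right,
      hgg, hhh, hhg, ← ht]
    ring
  have hiB : ⟪g - t • h, g - t • h⟫ = 1 - t ^ 2 := by
    rw [inner_sub_left, inner_sub_right, inner_sub_right, real_inner_smul_left,
      real_inner_smul_left, real_inner_smul_right, real_inner_smul_right,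
      hgg, hhh, hhg, ← ht]
    ring
  have hnA : ‖h - t • g‖ = s := by
    rw [norm_eq_sqrt_real_inner, hiA]
  have hnB : ‖g - t • h‖ = s := by
    rw [norm_eq_sqrt_real_inner, hiB]
  have hA : s • a = h - t • g := by
    rw [← hca]
    show s • (‖h - ⟪g, h⟫ • g‖⁻¹ • (h - ⟪g, h⟫ • g)) = h - t • g
    rw [← ht, hnA, smul_smul, mul_inv_cancel₀ (ne_of_gt hspos), one_smul]
  have hB : s • b = g - t • h := by
    rw [← hcb]
    show s • (‖g - ⟪h, g⟫ • h‖⁻¹ • (g - ⟪h, g⟫ • h)) = g - t • h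
    rw [hhg, hnB, smul_smul, mul_inv_cancel₀ (ne_of_gt hspos), one_smul]
  have hne0 : (1 - t ^ 2) ≠ 0 := ne_of_gt (by linarith)
  -- inner product of a and b is -t
  have hab_inner : ⟪a, b⟫ = -t := by
    have e1 : ⟪s • a, s • b⟫ = (1 - t ^ 2) * ⟪a, b⟫ := by
      rw [real_inner_smul_left, real_inner_smul_right, ← mul_assoc, ← sq, hs2]
    have e2 : ⟪s • a, s • b⟫ = (1 - t ^ 2) * (-t) := by
      rw [hA, hB, inner_sub_left, inner_sub_right, inner_sub_right,
        real_inner_smul_left, real_inner_smul_left, real_inner_smul_right,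
        real_inner_smul_right, hgg, hhh, hhg, ← ht]
      ring
    exact mul_left_cancel₀ hne0 (e1.symm.trans e2)
  -- vector identities
  have hgid : (1 - t ^ 2) • g = s • b + (t * s) • a := by
    rw [mul_smul, hA, hB, smul_sub]
    module
  have hhid : (1 - t ^ 2) • h = s • a + (t * s) • b := by
    rw [mul_smul, hA, hB, smul_sub]
    module
  -- diameter bounds
  have bdd : BddAbove {r | ∃ x ∈ C, ∃ y ∈ C, r = sdist x y} := by
    refine ⟨Real.pi, ?_⟩
    rintro r ⟨u, -, v, -, rfl⟩
    exact Real.arccos_le_pi _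
  have hax_le : sdist a x ≤ sdiam C := le_csSup bdd ⟨a, haC, x, hx, rfl⟩
  have hbx_le : sdist b x ≤ sdiam C := le_csSup bdd ⟨b, hbC, x, hx, rfl⟩
  have habm1 : -1 ≤ ⟪a, b⟫ := by
    have h0 := abs_real_inner_le_norm a b
    rw [ha1, hb1, mul_one] at h0
    linarith [(abs_le.mp h0).1]
  have hbxm1 : -1 ≤ ⟪b, x⟫ := by
    have h0 := abs_real_inner_le_norm b x
    rw [hb1, hx1, mul_one] at h0
    linarith [(abs_le.mp h0).1]
  have haxm1 : -1 ≤ ⟪a, x⟫ := by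
    have h0 := abs_real_inner_le_norm a x
    rw [ha1, hx1, mul_one] at h0
    linarith [(abs_le.mp h0).1]
  have hax1 : ⟪a, x⟫ ≤ 1 := by
    have h0 := real_inner_le_norm a x
    rw [ha1, hx1, mul_one] at h0
    exact h0
  have hbx1 : ⟪b, x⟫ ≤ 1 := by
    have h0 := real_inner_le_norm b x
    rw [hb1, hx1, mul_one] at h0
    exact h0
  have hab1 : ⟪a, b⟫ ≤ 1 := by
    have h0 := real_inner_le_norm a b
    rw [ha1, hb1, mul_one] at h0
    exact h0
  -- 0 ≤ ⟪a,b⟫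
  have hab0 : 0 ≤ ⟪a, b⟫ := by
    by_contra hlt
    push_neg at hlt
    have h1 : Real.arccos 0 < Real.arccos ⟪a, b⟫ :=
      Real.strictAntiOn_arccos ⟨habm1, hab1⟩ ⟨by norm_num, by norm_num⟩ hlt
    rw [Real.arccos_zero] at h1
    have h2 : sdist a b ≤ Real.pi / 2 := hab ▸ hdiam
    rw [sdist] at h2
    linarith
  -- ⟪a,b⟫ ≤ ⟪b,x⟫
  have hkey1 : ⟪a, b⟫ ≤ ⟪b, x⟫ := by
    by_contra hlt
    push_neg at hlt
    have h1 : Real.arccos ⟪a, b⟫ < Real.arccos ⟪b, x⟫ :=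
      Real.strictAntiOn_arccos ⟨hbxm1, hbx1⟩ ⟨habm1, hab1⟩ hlt
    have h2 : sdist b x ≤ sdist a b := hab ▸ hbx_le
    rw [sdist, sdist] at h2
    linarith
  -- ⟪a,b⟫ ≤ ⟪a,x⟫
  have hkey2 : ⟪a, b⟫ ≤ ⟪a, x⟫ := by
    by_contra hlt
    push_neg at hlt
    have h1 : Real.arccos ⟪a, b⟫ < Real.arccos ⟪a, x⟫ :=
      Real.strictAntiOn_arccos ⟨haxm1, hax1⟩ ⟨habm1, hab1⟩ hlt
    have h2 : sdist a x ≤ sdist a b := hab ▸ hax_le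
    rw [sdist, sdist] at h2
    linarith
  -- conclude
  have hginner : (1 - t ^ 2) * ⟪g, x⟫ = s * ⟪b, x⟫ + (t * s) * ⟪a, x⟫ := by
    have h0 : ⟪(1 - t ^ 2) • g, x⟫ = ⟪s • b + (t * s) • a, x⟫ := by rw [hgid]
    rw [inner_add_left, real_inner_smul_left, real_inner_smul_left,
      real_inner_smul_left] at h0
    exact h0
  have hhinner : (1 - t ^ 2) * ⟪h, x⟫ = s * ⟪a, x⟫ + (t * s) * ⟪b, x⟫ := by
    have h0 : ⟪(1 - t ^ 2) • h, x⟫ = ⟪s • a + (t * s) • b, x⟫ := by rw [hhid]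
    rw [inner_add_left, real_inner_smul_left, real_inner_smul_left,
      real_inner_smul_left] at h0
    exact h0
  have htval : t = -⟪a, b⟫ := by linarith [hab_inner]
  have hgx : 0 ≤ ⟪g, x⟫ := by
    have q1 : 0 ≤ ⟪a, b⟫ * (1 - ⟪a, x⟫) := mul_nonneg hab0 (by linarith)
    have q2 : 0 ≤ ⟪b, x⟫ - ⟪a, b⟫ * ⟪a, x⟫ := by nlinarith [q1, hkey1]
    have q3 : 0 ≤ s * (⟪b, x⟫ - ⟪a, b⟫ * ⟪a, x⟫) := mul_nonneg hspos.le q2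
    have hnum : 0 ≤ s * ⟪b, x⟫ + (t * s) * ⟪a, x⟫ := by
      rw [htval]; nlinarith [q3]
    by_contra hneg
    push_neg at hneg
    have q4 : (1 - t ^ 2) * ⟪g, x⟫ < 0 :=
      mul_neg_of_pos_of_neg (by linarith) hneg
    linarith [hnum, hginner, q4]
  have hhx : 0 ≤ ⟪h, x⟫ := by
    have q1 : 0 ≤ ⟪a, b⟫ * (1 - ⟪b, x⟫) := mul_nonneg hab0 (by linarith)
    have q2 : 0 ≤ ⟪a, x⟫ - ⟪a, b⟫ * ⟪b, x⟫ := by nlinarith [q1, hkey2]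
    have q3 : 0 ≤ s * (⟪a, x⟫ - ⟪a, b⟫ * ⟪b, x⟫) := mul_nonneg hspos.le q2
    have hnum : 0 ≤ s * ⟪a, x⟫ + (t * s) * ⟪b, x⟫ := by
      rw [htval]; nlinarith [q3]
    by_contra hneg
    push_neg at hneg
    have q4 : (1 - t ^ 2) * ⟪h, x⟫ < 0 :=
      mul_neg_of_pos_of_neg (by linarith) hneg
    linarith [hnum, hhinner, q4]
  exact ⟨⟨hxS, hgx⟩, ⟨hxS, hhx⟩⟩
end
end

section
/- Let K be a hemisphere of S^d with center k supporting a convex body C ⊂ S^d. If k ∉ C, then width_K(C) = π/2 − ρ, where ρ is the radius of the largest ball centered at k disjoint from the interior of C; if k ∈ bd(C), then width_K(C) = π/2; if k ∈ int(C), then width_K(C) = π/2 + ρ, where ρ is the radius of the largest ball centered at k contained in C. -/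
open Set Metric
open scoped RealInnerProductSpace

noncomputable section

variable {d : ℕ}

section Helpers
variable {d : ℕ}

lemma mem_Sph_iff {x : E d} : x ∈ Sph d ↔ ‖x‖ = 1 := by
  simp [Sph, mem_sphere_iff_norm]

lemma inner_le_one' {x y : E d} (hx : ‖x‖ = 1) (hy : ‖y‖ = 1) : ⟪x, y⟫ ≤ 1 := by
  have := real_inner_le_norm x y
  rw [hx, hy] at this; linarith

lemma neg_one_le_inner' {x y : E d} (hx : ‖x‖ = 1) (hy : ‖y‖ = 1) : -1 ≤ ⟪x, y⟫ := by
  have := abs_real_inner_le_norm x y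
  rw [hx, hy] at this
  have := abs_le.mp (by linarith : |⟪x, y⟫| ≤ 1)
  exact this.1

lemma inner_self_one {x : E d} (hx : ‖x‖ = 1) : ⟪x, x⟫ = 1 := by
  rw [real_inner_self_eq_norm_sq, hx]; norm_num

lemma eq_of_inner_eq_one {x y : E d} (hx : ‖x‖ = 1) (hy : ‖y‖ = 1)
    (h : ⟪x, y⟫ = 1) : x = y := by
  have h2 : ‖x - y‖ ^ 2 = 0 := by
    rw [norm_sub_pow_two_real, hx, hy, h]; ring
  have h3 := pow_eq_zero_iff (n := 2) (by norm_num) |>.mp h2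
  have := norm_eq_zero.mp h3
  exact sub_eq_zero.mp this

lemma cos_sdist {x y : E d} (hx : ‖x‖ = 1) (hy : ‖y‖ = 1) :
    Real.cos (sdist x y) = ⟪x, y⟫ :=
  Real.cos_arccos (neg_one_le_inner' hx hy) (inner_le_one' hx hy)

lemma arccos_le_arccos' {x y : ℝ} (h : x ≤ y) : Real.arccos y ≤ Real.arccos x := by
  unfold Real.arccos
  have := Real.monotone_arcsin h
  linarith

lemma sdist_le_iff {x y : E d} (hx : ‖x‖ = 1) (hy : ‖y‖ = 1) {r : ℝ}
    (hr0 : 0 ≤ r) (hrpi : r ≤ Real.pi) : sdist x y ≤ r ↔ Real.cos r ≤ ⟪x, y⟫ := by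
  constructor
  · intro h
    rw [← cos_sdist hx hy]
    -- cos antitone on [0, π]
    exact Real.cos_le_cos_of_nonneg_of_le_pi (Real.arccos_nonneg _) hrpi h
  · intro h
    have := arccos_le_arccos' h
    rwa [Real.arccos_cos hr0 hrpi] at this

end Helpers
section Cone
variable {d : ℕ}

def coneC (C : Set (E d)) : Set (E d) := {v : E d | ∃ r : ℝ, 0 ≤ r ∧ ∃ x ∈ C, v = r • x}

lemma sphConvex_coneC {C : Set (E d)} (h : SphConvex C) : Convex ℝ (coneC C) := h.2

lemma mem_coneC_of_mem {C : Set (E d)} {x : E d} (hx : x ∈ C) : x ∈ coneC C :=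
  ⟨1, zero_le_one, x, hx, (one_smul ℝ x).symm⟩

lemma coneC_repr {C : Set (E d)} (hsub : C ⊆ Sph d) {v : E d} (hv : v ∈ coneC C) :
    ∃ c ∈ C, v = ‖v‖ • c := by
  obtain ⟨r, hr, x, hx, rfl⟩ := hv
  refine ⟨x, hx, ?_⟩
  have hx1 : ‖x‖ = 1 := mem_Sph_iff.mp (hsub hx)
  rw [norm_smul, hx1, Real.norm_eq_abs, abs_of_nonneg hr, mul_one]

lemma nrm_norm {v : E d} (hv : v ≠ 0) : ‖nrm v‖ = 1 := by
  have : ‖v‖ ≠ 0 := norm_ne_zero_iff.mpr hv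
  rw [nrm, norm_smul, norm_inv, norm_norm, inv_mul_cancel₀ this]

lemma nrm_sub_self {v : E d} (hv : v ≠ 0) : ‖nrm v - v‖ = |1 - ‖v‖| := by
  have h0 : ‖v‖ ≠ 0 := norm_ne_zero_iff.mpr hv
  have : nrm v - v = (‖v‖⁻¹ - 1) • v := by rw [sub_smul, one_smul, nrm]
  rw [this, norm_smul, Real.norm_eq_abs]
  rw [← abs_of_nonneg (norm_nonneg v), ← abs_mul]
  congr 1
  field_simp
  simp only [abs_norm]; ring

lemma sInterior_subset {C : Set (E d)} : sInterior C ⊆ C := by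
  rintro x ⟨hx, ε, hε, hb⟩
  exact hb ⟨mem_ball_self hε, hx⟩

lemma sInterior_subset_Sph {C : Set (E d)} : sInterior C ⊆ Sph d := fun x hx => hx.1

lemma mem_interior_coneC {C : Set (E d)} (hsub : C ⊆ Sph d) {z : E d}
    (hz : z ∈ sInterior C) : z ∈ interior (coneC C) := by
  obtain ⟨hzS, ε, hε, hb⟩ := hz
  have hz1 : ‖z‖ = 1 := mem_Sph_iff.mp hzS
  set δ := min (ε / 3) (1 / 2) with hδdef
  have hδ : 0 < δ := lt_min (by linarith) (by norm_num)
  have hδε : δ ≤ ε / 3 := min_le_left _ _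
  have hδh : δ ≤ 1 / 2 := min_le_right _ _
  rw [mem_interior]
  refine ⟨Metric.ball z δ, ?_, Metric.isOpen_ball, Metric.mem_ball_self hδ⟩
  intro y hy
  rw [Metric.mem_ball, dist_eq_norm] at hy
  have hny : |‖y‖ - 1| < δ := by
    calc |‖y‖ - 1| = |‖y‖ - ‖z‖| := by rw [hz1]
    _ ≤ ‖y - z‖ := abs_norm_sub_norm_le y z
    _ < δ := hy
  have hy0 : y ≠ 0 := by
    intro h
    rw [h] at hny; simp at hny
    linarith
  have hwC : nrm y ∈ C := by
    apply hb
    refine ⟨?_, mem_Sph_iff.mpr (nrm_norm hy0)⟩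
    rw [Metric.mem_ball, dist_eq_norm]
    calc ‖nrm y - z‖ ≤ ‖nrm y - y‖ + ‖y - z‖ := norm_sub_le_norm_sub_add_norm_sub _ _ _
    _ = |1 - ‖y‖| + ‖y - z‖ := by rw [nrm_sub_self hy0]
    _ < δ + δ := by rw [abs_sub_comm]; exact add_lt_add hny hy
    _ ≤ ε := by linarith
  refine ⟨‖y‖, norm_nonneg y, nrm y, hwC, ?_⟩
  rw [nrm, smul_smul, mul_inv_cancel₀ (norm_ne_zero_iff.mpr hy0), one_smul]

lemma mem_sInterior_of_interior {C : Set (E d)} (hsub : C ⊆ Sph d) {x : E d}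
    (hxS : x ∈ Sph d) (h : x ∈ interior (coneC C)) : x ∈ sInterior C := by
  obtain ⟨δ, hδ, hb⟩ := Metric.isOpen_iff.mp isOpen_interior x h
  refine ⟨hxS, δ, hδ, ?_⟩
  rintro y ⟨hy, hyS⟩
  have : y ∈ coneC C := interior_subset (hb hy)
  obtain ⟨c, hc, hyc⟩ := coneC_repr hsub this
  rw [mem_Sph_iff.mp hyS] at hyc
  rw [hyc, one_smul]
  exact hc

lemma smul_mem_interior_coneC {C : Set (E d)} {v : E d} {t : ℝ}
    (ht : 0 < t) (hv : v ∈ interior (coneC C)) : t • v ∈ interior (coneC C) := by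
  obtain ⟨δ, hδ, hb⟩ := Metric.isOpen_iff.mp isOpen_interior v hv
  rw [mem_interior]
  refine ⟨Metric.ball (t • v) (t * δ), ?_, Metric.isOpen_ball,
    Metric.mem_ball_self (by positivity)⟩
  intro y hy
  rw [Metric.mem_ball, dist_eq_norm] at hy
  have h1 : t⁻¹ • y ∈ coneC C := by
    apply interior_subset
    apply hb
    rw [Metric.mem_ball, dist_eq_norm]
    have : t⁻¹ • y - v = t⁻¹ • (y - t • v) := by
      rw [smul_sub, smul_smul, inv_mul_cancel₀ ht.ne', one_smul]
    rw [this, norm_smul, norm_inv, Real.norm_eq_abs, abs_of_pos ht]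
    rw [inv_mul_lt_iff₀ ht]
    exact hy
  obtain ⟨r, hr, c, hc, hrc⟩ := h1
  exact ⟨t * r, by positivity, c, hc, by rw [← smul_smul, ← hrc, smul_smul,
    mul_inv_cancel₀ ht.ne', one_smul]⟩

end Cone
section Main
open Filter Topology
variable {d : ℕ}

/-- Lemma E: a point on the open segment from a body point to an interior point is interior. -/
lemma segment_mem_sInterior {C : Set (E d)} (hC : IsBody C) {p z : E d}
    (hp : p ∈ C) (hz : z ∈ sInterior C) {t : ℝ} (ht0 : 0 < t) (ht1 : t ≤ 1) :
    nrm (t • z + (1 - t) • p) ∈ sInterior C := by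
  obtain ⟨hsub, hcl, hconv, hint⟩ := hC
  have hz1 : ‖z‖ = 1 := mem_Sph_iff.mp (sInterior_subset_Sph hz)
  have hp1 : ‖p‖ = 1 := mem_Sph_iff.mp (hsub hp)
  set v := t • z + (1 - t) • p with hv
  have hvi : v ∈ interior (coneC C) :=
    (sphConvex_coneC hconv).combo_interior_closure_mem_interior
      (mem_interior_coneC hsub hz) (subset_closure (mem_coneC_of_mem hp))
      ht0 (by linarith) (by ring)
  have hv0 : v ≠ 0 := by
    intro h
    have h' : t • z = -((1 - t) • p) := by
      rw [eq_neg_iff_add_eq_zero]; exact h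
    have hn : t = 1 - t := by
      have := congrArg norm h'
      rw [norm_neg, norm_smul, norm_smul, hz1, hp1, Real.norm_eq_abs, Real.norm_eq_abs,
        abs_of_pos ht0, abs_of_nonneg (by linarith : (0:ℝ) ≤ 1 - t)] at this
      simpa using this
    have ht2 : t = 1 / 2 := by linarith
    have : z = -p := by
      have h2 : t • z = t • (-p) := by
        rw [h', smul_neg, ← hn]
      exact smul_right_injective _ ht0.ne' h2
    exact hconv.1 p hp (this ▸ sInterior_subset hz)
  have : nrm v = ‖v‖⁻¹ • v := rfl
  apply mem_sInterior_of_interior hsub (mem_Sph_iff.mpr (nrm_norm hv0))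
  rw [this]
  exact smul_mem_interior_coneC (inv_pos.mpr (norm_pos_iff.mpr hv0)) hvi

/-- Lemma H: limits along normalized segments. -/
lemma mem_of_limit_segment {C : Set (E d)} (hcl : IsClosed C) {x y : E d}
    (hy : ‖y‖ = 1) (h : ∀ t : ℝ, 0 < t → t < 1 → nrm ((1 - t) • x + t • y) ∈ C) :
    y ∈ C := by
  set f : ℝ → E d := fun t => nrm ((1 - t) • x + t • y) with hf
  have hg : Continuous fun t : ℝ => (1 - t) • x + t • y := by continuity
  have hg1 : (fun t : ℝ => (1 - t) • x + t • y) 1 = y := by simp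
  have hcf : ContinuousAt f 1 := by
    refine ContinuousAt.smul (f := fun t : ℝ => ‖(1 - t) • x + t • y‖⁻¹)
      (g := fun t : ℝ => (1 - t) • x + t • y) ?_ ?_
    · apply ContinuousAt.inv₀
      · exact (continuous_norm.comp hg).continuousAt
      · simp only [Function.comp, hg1]
        rw [hy]; norm_num
    · exact hg.continuousAt
  have hf1 : f 1 = y := by
    simp only [hf, nrm, hg1]
    rw [hy]; simp
  have hne : (𝓝[Set.Ioo (0:ℝ) 1] 1).NeBot := by
    rw [← mem_closure_iff_nhdsWithin_neBot, closure_Ioo (by norm_num : (0:ℝ) ≠ 1)]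
    exact ⟨zero_le_one, le_refl 1⟩
  have htend : Filter.Tendsto f (𝓝[Set.Ioo (0:ℝ) 1] 1) (𝓝 y) := by
    rw [← hf1]
    exact hcf.continuousWithinAt.tendsto
  have hev : ∀ᶠ t in 𝓝[Set.Ioo (0:ℝ) 1] 1, f t ∈ C := by
    filter_upwards [self_mem_nhdsWithin] with t ht
    exact h t ht.1 ht.2
  have : y ∈ closure C := mem_closure_of_tendsto htend hev
  rwa [hcl.closure_eq] at this

/-- Lemma G: an interior point does not maximize the inner product with a unit vector. -/
lemma exists_gt_of_sInterior {C : Set (E d)} {k x : E d} (hk : ‖k‖ = 1)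
    (hx : x ∈ sInterior C) (h0 : 0 ≤ ⟪k, x⟫) (h1 : ⟪k, x⟫ < 1) :
    ∃ y ∈ C, ⟪k, x⟫ < ⟪k, y⟫ := by
  obtain ⟨hxS, ε, hε, hb⟩ := hx
  have hx1 : ‖x‖ = 1 := mem_Sph_iff.mp hxS
  set m := ⟪k, x⟫ with hm
  set δ := ε / 3 with hδdef
  have hδ : 0 < δ := by positivity
  set v := x + δ • k with hv
  have hkv : ⟪k, v⟫ = m + δ := by
    rw [hv, inner_add_right, real_inner_smul_right, inner_self_one hk, mul_one]
  have hnv2 : ‖v‖ ^ 2 = 1 + 2 * δ * m + δ ^ 2 := by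
    rw [hv, norm_add_sq_real, hx1, real_inner_smul_right, norm_smul, Real.norm_eq_abs,
      abs_of_pos hδ, hk, real_inner_comm]
    ring
  have hnv_ge : 1 ≤ ‖v‖ := by
    nlinarith [norm_nonneg v, sq_nonneg δ]
  have hnv_lt : ‖v‖ < 1 + δ := by
    nlinarith [norm_nonneg v]
  have hv0 : v ≠ 0 := by
    intro h; rw [h, norm_zero] at hnv_ge; linarith
  have hnvpos : 0 < ‖v‖ := by linarith
  refine ⟨nrm v, ?_, ?_⟩
  · apply hb
    refine ⟨?_, mem_Sph_iff.mpr (nrm_norm hv0)⟩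
    rw [Metric.mem_ball, dist_eq_norm]
    calc ‖nrm v - x‖ ≤ ‖nrm v - v‖ + ‖v - x‖ := norm_sub_le_norm_sub_add_norm_sub _ _ _
    _ = |1 - ‖v‖| + ‖δ • k‖ := by rw [nrm_sub_self hv0, hv, add_sub_cancel_left]
    _ = (‖v‖ - 1) + δ := by
        rw [abs_sub_comm, abs_of_nonneg (by linarith), norm_smul, Real.norm_eq_abs,
          abs_of_pos hδ, hk, mul_one]
    _ < δ + δ := by linarith
    _ < ε := by rw [hδdef]; linarith
  · rw [nrm, real_inner_smul_right, hkv]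
    rw [inv_mul_eq_div, lt_div_iff₀ hnvpos]
    nlinarith
lemma nonpos_of_le_smul {c K : ℝ} (h : ∀ t : ℝ, 0 < t → t ≤ 1 → c ≤ t * K) : c ≤ 0 := by
  by_contra hc
  push_neg at hc
  rcases le_or_gt K 0 with hK | hK
  · nlinarith [h 1 one_pos le_rfl]
  · have ht := h (min 1 (c / (2 * K))) (lt_min one_pos (by positivity)) (min_le_left _ _)
    have h1 : min 1 (c / (2 * K)) * K ≤ (c / (2 * K)) * K :=
      mul_le_mul_of_nonneg_right (min_le_right _ _) hK.le
    have h2 : (c / (2 * K)) * K = c / 2 := by field_simp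
    nlinarith

lemma nrm_smul_pos {q : E d} {l : ℝ} (hl : 0 < l) (hq : ‖q‖ = 1) : nrm (l • q) = q := by
  rw [nrm, norm_smul, Real.norm_eq_abs, abs_of_pos hl, hq, mul_one, smul_smul,
    inv_mul_cancel₀ hl.ne', one_smul]

lemma arccos_sqrt_one_sub_sq {m : ℝ} (h0 : 0 ≤ m) (h1 : m ≤ 1) :
    Real.arccos (Real.sqrt (1 - m ^ 2)) = Real.pi / 2 - Real.arccos m := by
  have hb1 : Real.arccos m ≤ Real.pi / 2 := Real.arccos_le_pi_div_two.mpr h0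
  have hb0 : 0 ≤ Real.arccos m := Real.arccos_nonneg m
  rw [← Real.sin_arccos, ← Real.cos_pi_div_two_sub, Real.arccos_cos (by linarith)
    (by linarith [Real.pi_pos])]

/-- Gram/Cauchy–Schwarz inequality for three unit vectors. -/
lemma gram_ineq {x y p : E d} (hx : ‖x‖ = 1) (hy : ‖y‖ = 1) (hp : ‖p‖ = 1) :
    |⟪x, y⟫ - ⟪x, p⟫ * ⟪y, p⟫| ≤ Real.sqrt ((1 - ⟪x, p⟫ ^ 2) * (1 - ⟪y, p⟫ ^ 2)) := by
  set u := x - ⟪x, p⟫ • p with hu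
  set v := y - ⟪y, p⟫ • p with hv
  have hpp : ⟪p, p⟫ = 1 := inner_self_one hp
  have huv : ⟪u, v⟫ = ⟪x, y⟫ - ⟪x, p⟫ * ⟪y, p⟫ := by
    simp only [hu, hv, inner_sub_left, inner_sub_right, real_inner_smul_left,
      real_inner_smul_right, hpp]
    rw [real_inner_comm p y]
    ring
  have hu2 : ‖u‖ ^ 2 = 1 - ⟪x, p⟫ ^ 2 := by
    rw [hu, norm_sub_sq_real, hx, norm_smul, Real.norm_eq_abs, real_inner_smul_right]
    rw [hp, mul_one, sq_abs]
    ring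
  have hv2 : ‖v‖ ^ 2 = 1 - ⟪y, p⟫ ^ 2 := by
    rw [hv, norm_sub_sq_real, hy, norm_smul, Real.norm_eq_abs, real_inner_smul_right]
    rw [hp, mul_one, sq_abs]
    ring
  calc |⟪x, y⟫ - ⟪x, p⟫ * ⟪y, p⟫| = |⟪u, v⟫| := by rw [huv]
  _ ≤ ‖u‖ * ‖v‖ := abs_real_inner_le_norm u v
  _ = Real.sqrt (‖u‖ ^ 2) * Real.sqrt (‖v‖ ^ 2) := by
      rw [Real.sqrt_sq (norm_nonneg u), Real.sqrt_sq (norm_nonneg v)]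
  _ = Real.sqrt ((1 - ⟪x, p⟫ ^ 2) * (1 - ⟪y, p⟫ ^ 2)) := by
      have hxp : |⟪x, p⟫| ≤ 1 := by
        have := abs_real_inner_le_norm x p
        rw [hx, hp] at this; linarith [this]
      have h0 : (0:ℝ) ≤ 1 - ⟪x, p⟫ ^ 2 := by
        nlinarith [sq_abs (⟪x, p⟫ : ℝ), abs_nonneg (⟪x, p⟫ : ℝ)]
      rw [hu2, hv2, Real.sqrt_mul h0]

/-- Lemma D: supporting hemisphere at a non-interior point of the body. -/
lemma exists_support {C : Set (E d)} (hC : IsBody C) {q : E d} (hq : q ∈ C)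
    (hqi : q ∉ sInterior C) : ∃ k' : E d, k' ∈ Sph d ∧ ⟪k', q⟫ = 0 ∧ C ⊆ Hemi k' := by
  obtain ⟨hsub, hcl, hconv, z, hz⟩ := hC
  have hzi : z ∈ interior (coneC C) := mem_interior_coneC hsub hz
  have hqni : q ∉ interior (coneC C) := fun h =>
    hqi (mem_sInterior_of_interior hsub (hsub hq) h)
  obtain ⟨f, hf⟩ := geometric_hahn_banach_open_point
    ((sphConvex_coneC hconv).interior) isOpen_interior hqni
  -- f a < f q for all a in interior (coneC C)
  have hS : ∀ a ∈ coneC C, f a ≤ f q := by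
    intro a ha
    have key : ∀ t : ℝ, 0 < t → t ≤ 1 → f a - f q ≤ t * (f a - f z) := by
      intro t ht0 ht1
      have := hf _ ((sphConvex_coneC hconv).combo_interior_closure_mem_interior
        (a := t) (b := 1 - t) hzi (subset_closure ha) ht0 (by linarith) (by ring))
      rw [map_add, map_smul, map_smul] at this
      simp only [smul_eq_mul] at this
      nlinarith
    linarith [nonpos_of_le_smul key]
  have hq0 : f q = 0 := by
    have h2 : (2 : ℝ) • q ∈ coneC C := ⟨2, by norm_num, q, hq, rfl⟩
    have h0 : (0 : E d) ∈ coneC C := ⟨0, le_rfl, q, hq, (zero_smul ℝ q).symm⟩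
    have := hS _ h2
    rw [map_smul] at this
    simp only [smul_eq_mul] at this
    have h0' := hS _ h0
    rw [map_zero] at h0'
    linarith
  set w := (InnerProductSpace.toDual ℝ (E d)).symm f with hw
  have hwx : ∀ x : E d, ⟪w, x⟫ = f x := fun x => InnerProductSpace.toDual_symm_apply
  have hw0 : w ≠ 0 := by
    intro h
    have hz' := hf z hzi
    rw [← hwx z, ← hwx q, h] at hz'
    simp at hz'
  have hnw : 0 < ‖w‖ := norm_pos_iff.mpr hw0
  refine ⟨‖w‖⁻¹ • (-w), ?_, ?_, ?_⟩
  · rw [mem_Sph_iff, norm_smul, Real.norm_eq_abs, abs_of_pos (inv_pos.mpr hnw), norm_neg,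
      inv_mul_cancel₀ hnw.ne']
  · rw [real_inner_smul_left, inner_neg_left, hwx, hq0]
    ring
  · intro x hx
    refine ⟨hsub hx, ?_⟩
    rw [real_inner_smul_left, inner_neg_left, hwx]
    have := hS x (mem_coneC_of_mem hx)
    rw [hq0] at this
    have h1 : 0 ≤ -f x := by linarith
    positivity

/-- Lemma B: the supporting inequality at a farthest/nearest point. -/
lemma support_ineq {C : Set (E d)} (hC : IsBody C) {k p : E d} (hk : ‖k‖ = 1)
    (hp : p ∈ C) (hhemi : C ⊆ Hemi k) (hmax : ∀ x ∈ C, ⟪k, x⟫ ≤ ⟪k, p⟫)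
    (hm0 : 0 < ⟪k, p⟫) : ∀ x ∈ C, ⟪k, x⟫ ≤ ⟪k, p⟫ * ⟪p, x⟫ := by
  obtain ⟨hsub, hcl, hconv, hint⟩ := hC
  intro x hx
  set m := ⟪k, p⟫ with hm
  set a := ⟪k, x⟫ - m with ha
  set b := ⟪p, x⟫ with hb
  have hp1 : ‖p‖ = 1 := mem_Sph_iff.mp (hsub hp)
  have hx1 : ‖x‖ = 1 := mem_Sph_iff.mp (hsub hx)
  have hkx0 : 0 ≤ ⟪k, x⟫ := (hhemi hx).2
  have key : ∀ t : ℝ, 0 < t → t ≤ 1 →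
      2 * (a * m - m ^ 2 * (b - 1)) ≤ t * (m ^ 2 * (2 - 2 * b) - a ^ 2) := by
    intro t ht0 ht1
    set v := (1 - t) • p + t • x with hv
    have hvc : v ∈ coneC C :=
      (sphConvex_coneC hconv) (mem_coneC_of_mem hp) (mem_coneC_of_mem hx)
        (by linarith) ht0.le (by ring)
    obtain ⟨c, hc, hvr⟩ := coneC_repr hsub hvc
    have hkv : ⟪k, v⟫ = m + t * a := by
      rw [hv, inner_add_right, real_inner_smul_right, real_inner_smul_right]
      simp only [ha, hm]
      ring
    have hkv2 : ⟪k, v⟫ ≤ ‖v‖ * m := by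
      have hcm : ⟪k, c⟫ ≤ m := hmax c hc
      have hnn : (0:ℝ) ≤ ‖v‖ := norm_nonneg _
      calc ⟪k, v⟫ = ‖v‖ * ⟪k, c⟫ := by conv_lhs => rw [hvr, real_inner_smul_right]
      _ ≤ ‖v‖ * m := mul_le_mul_of_nonneg_left hcm hnn
    have hmta : 0 ≤ m + t * a := by
      have : a ≥ -m := by simp only [ha]; linarith
      nlinarith
    have hv2 : ‖v‖ ^ 2 = (1 - t) ^ 2 + 2 * t * (1 - t) * b + t ^ 2 := by
      rw [hv, norm_add_sq_real, norm_smul, norm_smul, real_inner_smul_left,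
        real_inner_smul_right, hp1, hx1, Real.norm_eq_abs, Real.norm_eq_abs,
        abs_of_nonneg (by linarith : (0:ℝ) ≤ 1 - t), abs_of_pos ht0]
      simp only [hb]
      ring
    have hsq : (m + t * a) ^ 2 ≤ m ^ 2 * ‖v‖ ^ 2 := by
      have h1 : m + t * a ≤ m * ‖v‖ := by rw [← hkv]; linarith [hkv2]
      nlinarith [norm_nonneg v, hm0]
    rw [hv2] at hsq
    nlinarith
  have := nonpos_of_le_smul (c := 2 * (a * m - m ^ 2 * (b - 1)))
    (K := m ^ 2 * (2 - 2 * b) - a ^ 2) key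
  have h2 : a * m ≤ m ^ 2 * (b - 1) := by linarith
  have h3 : a ≤ m * (b - 1) := by
    by_contra h'
    push_neg at h'
    nlinarith
  simp only [ha, hb] at h3 ⊢
  nlinarith

/-- Evaluation of the width as an attained lower bound. -/
lemma width_eq_of {C : Set (E d)} {k : E d} {v : ℝ}
    (hmem : ∃ k' ∈ Sph d, k' ≠ k ∧ k' ≠ -k ∧ Supports k' C ∧ v = lthick k k')
    (hlb : ∀ k' ∈ Sph d, k' ≠ k → k' ≠ -k → Supports k' C → v ≤ lthick k k') :
    width C k = v := by
  have hlb' : ∀ w ∈ {w | ∃ k' ∈ Sph d, k' ≠ k ∧ k' ≠ -k ∧ Supports k' C ∧ w = lthick k k'},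
      v ≤ w := by
    rintro w ⟨k', h1, h2, h3, h4, rfl⟩
    exact hlb k' h1 h2 h3 h4
  exact le_antisymm (csInf_le ⟨v, hlb'⟩ hmem) (le_csInf ⟨v, hmem⟩ hlb')
lemma norm_eq_of_sq {v : E d} {s : ℝ} (hs : 0 ≤ s) (h : ‖v‖ ^ 2 = s ^ 2) : ‖v‖ = s := by
  rw [← Real.sqrt_sq (norm_nonneg v), h, Real.sqrt_sq hs]

set_option maxHeartbeats 1000000 in
/-- Key lower bound. -/
lemma inner_ge_of_ball {C : Set (E d)} {k k' : E d} (hk : ‖k‖ = 1) (hk' : ‖k'‖ = 1)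
    (hne : k' ≠ k) (hne' : k' ≠ -k) {μ : ℝ} (hμ0 : 0 ≤ μ) (hμ1 : μ < 1)
    (hball : ∀ x : E d, ‖x‖ = 1 → μ < ⟪k, x⟫ → x ∈ C) (hhemi : C ⊆ Hemi k') :
    Real.sqrt (1 - μ ^ 2) ≤ ⟪k, k'⟫ := by
  set t' := ⟪k, k'⟫ with ht'
  have ht'le : |t'| ≤ 1 := by
    have := abs_real_inner_le_norm k k'
    rw [hk, hk'] at this; linarith
  set w := k' - t' • k with hwdef
  have hw0 : w ≠ 0 := by
    intro h
    have hkk : k' = t' • k := by rwa [sub_eq_zero] at h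
    have habs : |t'| = 1 := by
      have := hk'
      rw [hkk, norm_smul, hk, mul_one, Real.norm_eq_abs] at this
      exact this
    rcases (abs_eq (by norm_num : (0:ℝ) ≤ 1)).mp habs with h1 | h1
    · exact hne (by rw [hkk, h1, one_smul])
    · exact hne' (by rw [hkk, h1, neg_one_smul])
  have hkk1 : ⟪k, k⟫ = 1 := inner_self_one hk
  have hckk : (⟪k', k⟫ : ℝ) = t' := by rw [ht']; exact (real_inner_comm k' k).symm
  have hw2 : ‖w‖ ^ 2 = 1 - t' ^ 2 := by
    rw [hwdef, norm_sub_sq_real, hk', norm_smul, Real.norm_eq_abs, hk, mul_one,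
      real_inner_smul_right, hckk, sq_abs]
    ring
  have hnw : 0 < ‖w‖ := norm_pos_iff.mpr hw0
  set u := nrm w with hu
  have hu1 : ‖u‖ = 1 := nrm_norm hw0
  have hku : ⟪k, u⟫ = 0 := by
    rw [hu, nrm, real_inner_smul_right, hwdef, inner_sub_right, real_inner_smul_right,
      hkk1, ← ht']
    ring
  have hk'u : ⟪k', u⟫ = ‖w‖ := by
    have h1 : ⟪k', w⟫ = 1 - t' ^ 2 := by
      rw [hwdef, inner_sub_right, real_inner_smul_right, inner_self_one hk', hckk]
      ring
    rw [hu, nrm, real_inner_smul_right, h1, ← hw2]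
    rw [sq, ← mul_assoc, inv_mul_cancel₀ hnw.ne', one_mul]
  have key : ∀ c : ℝ, μ < c → c < 1 → Real.sqrt (1 - c ^ 2) * ‖w‖ ≤ c * t' := by
    intro c hc1 hc2
    set s := Real.sqrt (1 - c ^ 2) with hs
    have hc0 : 0 < c := lt_of_le_of_lt hμ0 hc1
    have hs2 : s ^ 2 = 1 - c ^ 2 := Real.sq_sqrt (by nlinarith)
    have hs0 : 0 ≤ s := Real.sqrt_nonneg _
    set x := c • k - s • u with hx
    have hxn : ‖x‖ = 1 := by
      apply norm_eq_of_sq zero_le_one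
      rw [hx, norm_sub_sq_real, norm_smul, norm_smul, real_inner_smul_left,
        real_inner_smul_right, hku, Real.norm_eq_abs, Real.norm_eq_abs, hk, hu1,
        abs_of_pos hc0, abs_of_nonneg hs0]
      nlinarith
    have hkx : ⟪k, x⟫ = c := by
      rw [hx, inner_sub_right, real_inner_smul_right, real_inner_smul_right, hkk1, hku]
      ring
    have hxC : x ∈ C := hball x hxn (by rw [hkx]; exact hc1)
    have hxH := (hhemi hxC).2
    rw [hx, inner_sub_right, real_inner_smul_right, real_inner_smul_right,
      hckk, hk'u] at hxH
    linarith
  have ht'0 : 0 ≤ t' := by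
    have h1 := key ((μ + 1) / 2) (by linarith) (by linarith)
    have h2 : 0 ≤ Real.sqrt (1 - ((μ + 1) / 2) ^ 2) * ‖w‖ :=
      mul_nonneg (Real.sqrt_nonneg _) hnw.le
    nlinarith
  have key2 : ∀ c : ℝ, μ < c → c < 1 → 1 - c ^ 2 ≤ t' ^ 2 := by
    intro c hc1 hc2
    have hc0 : 0 < c := lt_of_le_of_lt hμ0 hc1
    have h1 := key c hc1 hc2
    have hs2 : Real.sqrt (1 - c ^ 2) ^ 2 = 1 - c ^ 2 := Real.sq_sqrt (by nlinarith)
    have h3 : (Real.sqrt (1 - c ^ 2) * ‖w‖) ^ 2 ≤ (c * t') ^ 2 := by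
      have h0 : 0 ≤ Real.sqrt (1 - c ^ 2) * ‖w‖ :=
        mul_nonneg (Real.sqrt_nonneg _) hnw.le
      nlinarith
    rw [mul_pow, mul_pow, hs2, hw2] at h3
    nlinarith
  have hfin : 1 - μ ^ 2 ≤ t' ^ 2 := by
    by_contra h'
    push_neg at h'
    set s := Real.sqrt (1 - t' ^ 2) with hs
    have hs2 : s ^ 2 = 1 - t' ^ 2 := Real.sq_sqrt (by nlinarith [sq_abs t', abs_nonneg t'])
    have hs0 : 0 ≤ s := Real.sqrt_nonneg _
    have hμs : μ < s := by nlinarith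
    have hs1 : s ≤ 1 := by nlinarith
    set c := (μ + s) / 2 with hc
    have hc1 : μ < c := by simp only [hc]; linarith
    have hcs : c < s := by simp only [hc]; linarith
    have hc2 : c < 1 := lt_of_lt_of_le hcs hs1
    have := key2 c hc1 hc2
    nlinarith
  calc Real.sqrt (1 - μ ^ 2) ≤ Real.sqrt (t' ^ 2) := Real.sqrt_le_sqrt hfin
  _ = |t'| := Real.sqrt_sq_eq_abs t'
  _ = t' := abs_of_nonneg ht'0

/-- Case 2 of the theorem. -/
lemma case2 {C : Set (E d)} (hC : IsBody C) {k : E d} (hkS : k ∈ Sph d)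
    (hsup : Supports k C) (hkC : k ∈ C \ sInterior C) : width C k = Real.pi / 2 := by
  have hk : ‖k‖ = 1 := mem_Sph_iff.mp hkS
  obtain ⟨k', hk'S, hk'q, hk'hemi⟩ := exists_support hC hkC.1 hkC.2
  have hkk' : ⟪k, k'⟫ = 0 := by rw [real_inner_comm]; exact hk'q
  apply width_eq_of
  · refine ⟨k', hk'S, ?_, ?_, ⟨hk'hemi, ⟨k, ⟨hkS, hk'q⟩, hkC.1⟩⟩, ?_⟩
    · intro h
      rw [h, inner_self_one hk] at hkk'
      norm_num at hkk'
    · intro h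
      rw [h, inner_neg_right, inner_self_one hk] at hkk'
      norm_num at hkk'
    · rw [lthick, sdist, hkk', Real.arccos_zero]
      ring
  · rintro k'' hk''S hne hne' ⟨hhemi, htouch⟩
    have h0 : 0 ≤ ⟪k, k''⟫ := by
      rw [real_inner_comm]
      exact (hhemi hkC.1).2
    have := Real.arccos_le_pi_div_two.mpr h0
    rw [lthick, sdist]
    linarith
set_option maxHeartbeats 1000000 in
/-- Case 1 of the theorem. -/
lemma case1 {C : Set (E d)} (hC : IsBody C) {k : E d} (hkS : k ∈ Sph d)
    (hsup : Supports k C) (hkC : k ∉ C) :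
    width C k = Real.pi / 2 -
      sSup {r : ℝ | 0 ≤ r ∧ Disjoint (sBall k r) (sInterior C)} := by
  have hsub := hC.1
  have hcl := hC.2.1
  have hconv := hC.2.2.1
  have hint := hC.2.2.2
  have hk : ‖k‖ = 1 := mem_Sph_iff.mp hkS
  obtain ⟨c0, hc0b, hc0C⟩ := hsup.2
  have hcomp : IsCompact C := (isCompact_sphere (0:E d) 1).of_isClosed_subset hcl hsub
  have hcont : Continuous fun x : E d => (⟪k, x⟫ : ℝ) := Continuous.inner
    continuous_const continuous_id
  obtain ⟨p, hpC, hpmax⟩ := hcomp.exists_isMaxOn ⟨c0, hc0C⟩ hcont.continuousOn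
  have hpmax' : ∀ x ∈ C, ⟪k, x⟫ ≤ ⟪k, p⟫ := fun x hx => hpmax hx
  set m := (⟪k, p⟫ : ℝ) with hm
  have hp1 : ‖p‖ = 1 := mem_Sph_iff.mp (hsub hpC)
  have hm0 : 0 ≤ m := (hsup.1 hpC).2
  have hmle : m ≤ 1 := inner_le_one' hk hp1
  have hm1 : m < 1 := by
    rcases lt_or_eq_of_le hmle with h | h
    · exact h
    · exact absurd (by rw [eq_of_inner_eq_one hk hp1 h]; exact hpC) hkC
  have hmpos : 0 < m := by
    rcases eq_or_lt_of_le hm0 with h | h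
    · exfalso
      obtain ⟨z0, hz0⟩ := hint
      have hz0C := sInterior_subset hz0
      have h0' : 0 ≤ ⟪k, z0⟫ := (hsup.1 hz0C).2
      have hz0m : ⟪k, z0⟫ ≤ m := hpmax' z0 hz0C
      obtain ⟨y, hyC, hy⟩ := exists_gt_of_sInterior hk hz0 h0' (by linarith)
      have := hpmax' y hyC
      linarith
    · exact h
  have hAub : ∀ r ∈ {r : ℝ | 0 ≤ r ∧ Disjoint (sBall k r) (sInterior C)},
      r ≤ Real.arccos m := by
    rintro r ⟨hr0, hdisj⟩
    by_contra hcon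
    push_neg at hcon
    obtain ⟨z0, hz0⟩ := hint
    have hz0C := sInterior_subset hz0
    have hz0S : ‖z0‖ = 1 := mem_Sph_iff.mp (sInterior_subset_Sph hz0)
    have hz0k : 0 ≤ ⟪k, z0⟫ := (hsup.1 hz0C).2
    have hrpi : r < Real.pi := by
      by_contra hge
      push_neg at hge
      have hmem : z0 ∈ sBall k r :=
        ⟨sInterior_subset_Sph hz0, le_trans (Real.arccos_le_pi _) hge⟩
      exact Set.disjoint_left.mp hdisj hmem hz0
    have hcosr : Real.cos r < m := by
      have := Real.cos_lt_cos_of_nonneg_of_le_pi (Real.arccos_nonneg m) hrpi.le hcon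
      rwa [Real.cos_arccos (by linarith) hmle] at this
    have hcosr1 : -1 < Real.cos r := by
      have := Real.cos_lt_cos_of_nonneg_of_le_pi hr0 le_rfl hrpi
      rwa [Real.cos_pi] at this
    set t := (m - Real.cos r) / 2 with ht
    have ht0 : 0 < t := by simp only [ht]; linarith
    have ht1 : t < 1 := by simp only [ht]; linarith
    set v := t • z0 + (1 - t) • p with hv
    have hw := segment_mem_sInterior hC hpC hz0 ht0 ht1.le
    have hkv : ⟪k, v⟫ = m + t * (⟪k, z0⟫ - m) := by
      rw [hv, inner_add_right, real_inner_smul_right, real_inner_smul_right, ← hm]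
      ring
    have hkvlb : Real.cos r ≤ ⟪k, v⟫ := by
      rw [hkv]; nlinarith
    have hkvpos : 0 < ⟪k, v⟫ := by
      rw [hkv]; nlinarith
    have hnv : ‖v‖ ≤ 1 := by
      calc ‖v‖ ≤ ‖t • z0‖ + ‖(1 - t) • p‖ := norm_add_le _ _
      _ = t + (1 - t) := by
          rw [norm_smul, norm_smul, hz0S, hp1, Real.norm_eq_abs, Real.norm_eq_abs,
            abs_of_pos ht0, abs_of_nonneg (by linarith : (0:ℝ) ≤ 1 - t)]
          ring
      _ = 1 := by ring
    have hv0 : v ≠ 0 := by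
      intro h
      rw [h, inner_zero_right] at hkvpos
      exact lt_irrefl 0 hkvpos
    have hnvpos : 0 < ‖v‖ := norm_pos_iff.mpr hv0
    have hwball : nrm v ∈ sBall k r := by
      refine ⟨sInterior_subset_Sph hw, ?_⟩
      rw [sdist_le_iff hk (mem_Sph_iff.mp (sInterior_subset_Sph hw)) hr0 hrpi.le]
      rw [nrm, real_inner_smul_right]
      have hinv : 1 ≤ ‖v‖⁻¹ := by
        rw [le_inv_comm₀ one_pos hnvpos]
        simpa using hnv
      nlinarith
    exact Set.disjoint_left.mp hdisj hwball hw
  have hAmem : Real.arccos m ∈ {r : ℝ | 0 ≤ r ∧ Disjoint (sBall k r) (sInterior C)} := by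
    refine ⟨Real.arccos_nonneg m, Set.disjoint_left.mpr ?_⟩
    rintro x ⟨hxS, hxd⟩ hxint
    have hx1 : ‖x‖ = 1 := mem_Sph_iff.mp hxS
    have hxge : m ≤ ⟪k, x⟫ := by
      have h := Real.cos_le_cos_of_nonneg_of_le_pi (Real.arccos_nonneg (⟪k, x⟫:ℝ))
        (Real.arccos_le_pi m) hxd
      rwa [Real.cos_arccos (by linarith) hmle, Real.cos_arccos (neg_one_le_inner' hk hx1) (inner_le_one' hk hx1)] at h
    have hxle : ⟪k, x⟫ ≤ m := hpmax' x (sInterior_subset hxint)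
    have hxeq : ⟪k, x⟫ = m := le_antisymm hxle hxge
    obtain ⟨y, hyC, hy⟩ := exists_gt_of_sInterior hk hxint (by rw [hxeq]; exact hm0)
      (by rw [hxeq]; exact hm1)
    have := hpmax' y hyC
    rw [hxeq] at hy
    linarith
  have hsSup : sSup {r : ℝ | 0 ≤ r ∧ Disjoint (sBall k r) (sInterior C)} =
      Real.arccos m :=
    le_antisymm (csSup_le ⟨_, hAmem⟩ hAub) (le_csSup ⟨Real.arccos m, hAub⟩ hAmem)
  rw [hsSup]
  -- construct the optimal supporting hemisphere
  set s := Real.sqrt (1 - m ^ 2) with hsdef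
  have hs2 : s ^ 2 = 1 - m ^ 2 := Real.sq_sqrt (by nlinarith)
  have hs0 : 0 ≤ s := Real.sqrt_nonneg _
  have hspos : 0 < s := by nlinarith
  have hs1 : s < 1 := by nlinarith
  have harc : Real.arccos s = Real.pi / 2 - Real.arccos m := by
    rw [hsdef]; exact arccos_sqrt_one_sub_sq hm0 hmle
  set k' := s⁻¹ • (m • p - k) with hk'def
  have hpk : (⟪p, k⟫ : ℝ) = m := by rw [hm]; exact real_inner_comm k p
  have hmpk : ‖m • p - k‖ = s := by
    apply norm_eq_of_sq hs0
    rw [norm_sub_sq_real, norm_smul, real_inner_smul_left, Real.norm_eq_abs,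
      abs_of_pos hmpos, hp1, hk, hpk]
    linear_combination -hs2
  have hk'1 : ‖k'‖ = 1 := by
    rw [hk'def, norm_smul, Real.norm_eq_abs, abs_of_pos (inv_pos.mpr hspos), hmpk,
      inv_mul_cancel₀ hspos.ne']
  have hkk' : ⟪k, k'⟫ = -s := by
    rw [hk'def, real_inner_smul_right, inner_sub_right, real_inner_smul_right,
      inner_self_one hk, ← hm]
    field_simp
    linear_combination hs2
  have hk'p : ⟪k', p⟫ = 0 := by
    rw [hk'def, real_inner_smul_left, inner_sub_left, real_inner_smul_left,
      inner_self_one hp1, ← hm]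
    ring
  have hsi := support_ineq hC hk hpC hsup.1 hpmax' hmpos
  have hk'hemi : C ⊆ Hemi k' := by
    intro x hx
    refine ⟨hsub hx, ?_⟩
    rw [hk'def, real_inner_smul_left, inner_sub_left, real_inner_smul_left]
    have := hsi x hx
    rw [← hm] at this
    have h1 : 0 ≤ m * ⟪p, x⟫ - ⟪k, x⟫ := by linarith
    positivity
  apply width_eq_of
  · refine ⟨k', mem_Sph_iff.mpr hk'1, ?_, ?_,
      ⟨hk'hemi, ⟨p, ⟨hsub hpC, hk'p⟩, hpC⟩⟩, ?_⟩
    · intro h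
      rw [h, inner_self_one hk] at hkk'
      linarith
    · intro h
      rw [h, inner_neg_right, inner_self_one hk] at hkk'
      linarith
    · rw [lthick, sdist, hkk', Real.arccos_neg, harc]
      ring
  · rintro k'' hk''S hne hne' ⟨hhemi'', htouch''⟩
    have hk''1 : ‖k''‖ = 1 := mem_Sph_iff.mp hk''S
    have hg := gram_ineq hk hk''1 hp1
    rw [← hm] at hg
    have hsp0 : 0 ≤ (⟪k'', p⟫ : ℝ) := (hhemi'' hpC).2
    have hsple : |(⟪k'', p⟫ : ℝ)| ≤ 1 := by
      have := abs_real_inner_le_norm k'' p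
      rw [hk''1, hp1] at this; linarith
    have hbound : Real.sqrt ((1 - m ^ 2) * (1 - (⟪k'', p⟫:ℝ) ^ 2)) ≤ s := by
      rw [hsdef]
      apply Real.sqrt_le_sqrt
      nlinarith [sq_abs ((⟪k'', p⟫:ℝ)), abs_nonneg ((⟪k'', p⟫:ℝ))]
    have h1 : -s ≤ (⟪k, k''⟫ : ℝ) := by
      have habs := (abs_le.mp hg).1
      have h2 : 0 ≤ m * (⟪k'', p⟫:ℝ) := mul_nonneg hm0 hsp0
      linarith
    have h2 : Real.arccos ⟪k, k''⟫ ≤ Real.pi - Real.arccos s := by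
      calc Real.arccos ⟪k, k''⟫ ≤ Real.arccos (-s) := arccos_le_arccos' h1
      _ = Real.pi - Real.arccos s := Real.arccos_neg s
    rw [lthick, sdist]
    linarith
set_option maxHeartbeats 1600000 in
/-- Case 3 of the theorem. -/
lemma case3 {C : Set (E d)} (hC : IsBody C) {k : E d} (hkS : k ∈ Sph d)
    (hsup : Supports k C) (hkI : k ∈ sInterior C) :
    width C k = Real.pi / 2 + sSup {r : ℝ | 0 ≤ r ∧ sBall k r ⊆ C} := by
  have hsub := hC.1
  have hcl := hC.2.1
  have hconv := hC.2.2.1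
  have hk : ‖k‖ = 1 := mem_Sph_iff.mp hkS
  obtain ⟨c0, hc0b, hc0C⟩ := hsup.2
  have hc01 : ‖c0‖ = 1 := mem_Sph_iff.mp hc0b.1
  have hc0ni : c0 ∉ sInterior C := by
    intro hin
    have hnk : ‖(-k : E d)‖ = 1 := by rw [norm_neg]; exact hk
    have h0 : (0:ℝ) ≤ ⟪-k, c0⟫ := by rw [inner_neg_left, hc0b.2]; norm_num
    have h1 : (⟪-k, c0⟫:ℝ) < 1 := by rw [inner_neg_left, hc0b.2]; norm_num
    obtain ⟨y, hyC, hy⟩ := exists_gt_of_sInterior hnk hin h0 h1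
    rw [inner_neg_left, inner_neg_left, hc0b.2] at hy
    have := (hsup.1 hyC).2
    linarith
  set V := {y : E d | ∃ ε > 0, Metric.ball y ε ∩ Sph d ⊆ C} with hV
  have hVopen : IsOpen V := by
    rw [Metric.isOpen_iff]
    rintro y ⟨ε, hε, hb⟩
    refine ⟨ε / 2, by linarith, ?_⟩
    intro z hz
    refine ⟨ε / 2, by linarith, ?_⟩
    rintro w ⟨hw1, hw2⟩
    refine hb ⟨?_, hw2⟩
    rw [Metric.mem_ball] at *
    calc dist w y ≤ dist w z + dist z y := dist_triangle _ _ _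
    _ < ε := by linarith
  have hNIeq : Sph d \ sInterior C = Sph d ∩ Vᶜ := by
    ext x
    constructor
    · rintro ⟨hxS, hxn⟩
      exact ⟨hxS, fun hv => hxn ⟨hxS, hv⟩⟩
    · rintro ⟨hxS, hxv⟩
      exact ⟨hxS, fun hin => hxv hin.2⟩
  have hSphClosed : IsClosed (Sph d) := Metric.isClosed_sphere
  have hNIclosed : IsClosed (Sph d \ sInterior C) := by
    rw [hNIeq]
    exact hSphClosed.inter hVopen.isClosed_compl
  have hNIcomp : IsCompact (Sph d \ sInterior C) :=
    (isCompact_sphere (0:E d) 1).of_isClosed_subset hNIclosed Set.diff_subset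
  have hNIne : (Sph d \ sInterior C).Nonempty := ⟨c0, hc0b.1, hc0ni⟩
  have hcont : Continuous fun x : E d => (⟪k, x⟫ : ℝ) := Continuous.inner
    continuous_const continuous_id
  obtain ⟨q, hqNI, hqmax⟩ := hNIcomp.exists_isMaxOn hNIne hcont.continuousOn
  set μ := (⟪k, q⟫ : ℝ) with hμ
  have hq1 : ‖q‖ = 1 := mem_Sph_iff.mp hqNI.1
  have hqmax' : ∀ x ∈ Sph d \ sInterior C, ⟪k, x⟫ ≤ μ := fun x hx => hqmax hx
  have hball : ∀ x : E d, ‖x‖ = 1 → μ < ⟪k, x⟫ → x ∈ sInterior C := by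
    intro x hx hgt
    by_contra hxn
    exact absurd (hqmax' x ⟨mem_Sph_iff.mpr hx, hxn⟩) (not_le.mpr hgt)
  have hballC : ∀ x : E d, ‖x‖ = 1 → μ < ⟪k, x⟫ → x ∈ C := fun x h1 h2 =>
    sInterior_subset (hball x h1 h2)
  have hμ1 : μ < 1 := by
    rcases lt_or_eq_of_le (inner_le_one' hk hq1) with h | h
    · exact h
    · exact absurd (by rw [← eq_of_inner_eq_one hk hq1 h]; exact hkI) hqNI.2
  have hμpos : 0 < μ := by
    by_contra hneg
    push_neg at hneg
    have hmc : -c0 ∈ C := by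
      apply mem_of_limit_segment hcl (x := k) (by rw [norm_neg]; exact hc01)
      intro t ht0 ht1
      set v := (1 - t) • k + t • (-c0) with hv
      have hkv : ⟪k, v⟫ = 1 - t := by
        rw [hv, inner_add_right, real_inner_smul_right, real_inner_smul_right,
          inner_self_one hk, inner_neg_right, hc0b.2]
        ring
      have hv0 : v ≠ 0 := by
        intro h
        rw [h, inner_zero_right] at hkv
        linarith
      apply hballC _ (nrm_norm hv0)
      rw [nrm, real_inner_smul_right, hkv]
      have hpos : 0 < ‖v‖⁻¹ * (1 - t) :=
        mul_pos (inv_pos.mpr (norm_pos_iff.mpr hv0)) (by linarith)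
      linarith
    exact hconv.1 c0 hc0C hmc
  have hμ0 : 0 ≤ μ := hμpos.le
  have hqC : q ∈ C := by
    apply mem_of_limit_segment hcl (x := k) hq1
    intro t ht0 ht1
    set v := (1 - t) • k + t • q with hv
    have hkv : ⟪k, v⟫ = (1 - t) + t * μ := by
      rw [hv, inner_add_right, real_inner_smul_right, real_inner_smul_right,
        inner_self_one hk, ← hμ]
      ring
    have hkvpos : 0 < ⟪k, v⟫ := by rw [hkv]; nlinarith
    have hv0 : v ≠ 0 := by
      intro h
      rw [h, inner_zero_right] at hkvpos
      exact lt_irrefl 0 hkvpos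
    have hnv : ‖v‖ ≤ 1 := by
      calc ‖v‖ ≤ ‖(1 - t) • k‖ + ‖t • q‖ := norm_add_le _ _
      _ = (1 - t) + t := by
          rw [norm_smul, norm_smul, hk, hq1, Real.norm_eq_abs, Real.norm_eq_abs,
            abs_of_pos ht0, abs_of_nonneg (by linarith : (0:ℝ) ≤ 1 - t)]
          ring
      _ = 1 := by ring
    have hnvpos : 0 < ‖v‖ := norm_pos_iff.mpr hv0
    apply hballC _ (nrm_norm hv0)
    rw [nrm, real_inner_smul_right, hkv]
    have hinv : 1 ≤ ‖v‖⁻¹ := by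
      rw [le_inv_comm₀ one_pos hnvpos]
      simpa using hnv
    nlinarith
  set ρ := Real.arccos μ with hρ
  have hρpos : 0 < ρ := Real.arccos_pos.mpr hμ1
  have hρle : ρ ≤ Real.pi / 2 := Real.arccos_le_pi_div_two.mpr hμ0
  have hρpi : ρ < Real.pi := by linarith [Real.pi_pos]
  have hcosρ : Real.cos ρ = μ := Real.cos_arccos (by linarith) hμ1.le
  have hsinρ : Real.sin ρ = Real.sqrt (1 - μ ^ 2) := Real.sin_arccos μ
  have hsqpos : 0 < Real.sqrt (1 - μ ^ 2) := Real.sqrt_pos.mpr (by nlinarith)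
  -- the unit vector towards q
  have hqk : q - μ • k ≠ 0 := by
    intro h
    have hq' : q = μ • k := by rwa [sub_eq_zero] at h
    rw [hq', norm_smul, hk, mul_one, Real.norm_eq_abs, abs_of_nonneg hμ0] at hq1
    linarith
  set u := nrm (q - μ • k) with hu
  have hqk2 : (⟪q, k⟫ : ℝ) = μ := by rw [hμ]; exact (real_inner_comm q k).symm
  have hw2 : ‖q - μ • k‖ ^ 2 = 1 - μ ^ 2 := by
    rw [norm_sub_sq_real, hq1, norm_smul, real_inner_smul_right, hqk2, hk,
      Real.norm_eq_abs, abs_of_nonneg hμ0]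
    ring
  have hnw : ‖q - μ • k‖ = Real.sqrt (1 - μ ^ 2) := by
    apply norm_eq_of_sq (Real.sqrt_nonneg _)
    rw [hw2, Real.sq_sqrt (by nlinarith : (0:ℝ) ≤ 1 - μ ^ 2)]
  have hu1 : ‖u‖ = 1 := nrm_norm hqk
  have hku : ⟪k, u⟫ = 0 := by
    rw [hu, nrm, real_inner_smul_right, inner_sub_right, real_inner_smul_right,
      inner_self_one hk, ← hμ]
    ring
  have hqu : q = μ • k + Real.sqrt (1 - μ ^ 2) • u := by
    rw [hu, nrm, hnw, smul_smul, mul_inv_cancel₀ hsqpos.ne', one_smul]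
    abel
  -- the supremum
  have hAub : ∀ r ∈ {r : ℝ | 0 ≤ r ∧ sBall k r ⊆ C}, r ≤ ρ := by
    rintro r ⟨hr0, hrC⟩
    by_contra hcon
    push_neg at hcon
    set s := min r ((ρ + Real.pi) / 2) with hs
    have hsρ : ρ < s := lt_min hcon (by linarith)
    have hsπ : s < Real.pi := lt_of_le_of_lt (min_le_right _ _) (by linarith)
    have hsr : s ≤ r := min_le_left _ _
    have hs0 : 0 < s := lt_trans hρpos hsρ
    have hsins : 0 < Real.sin s := Real.sin_pos_of_pos_of_lt_pi hs0 hsπ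
    set xs := Real.cos s • k + Real.sin s • u with hxs
    have hkxs : ⟪k, xs⟫ = Real.cos s := by
      rw [hxs, inner_add_right, real_inner_smul_right, real_inner_smul_right,
        inner_self_one hk, hku]
      ring
    have hxs1 : ‖xs‖ = 1 := by
      apply norm_eq_of_sq zero_le_one
      rw [hxs, norm_add_sq_real, norm_smul, norm_smul, real_inner_smul_left,
        real_inner_smul_right, hku, Real.norm_eq_abs, Real.norm_eq_abs, hk, hu1,
        mul_one, mul_one, sq_abs, sq_abs]
      have := Real.sin_sq_add_cos_sq s
      linarith
    have hsd : sdist k xs = s := by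
      rw [sdist, hkxs, Real.arccos_cos hs0.le hsπ.le]
    have hxsC : xs ∈ C := hrC ⟨mem_Sph_iff.mpr hxs1, by rw [hsd]; exact hsr⟩
    set A1 := Real.sin (s - ρ) with hA1
    have hA1pos : 0 < A1 :=
      Real.sin_pos_of_pos_of_lt_pi (by linarith) (by linarith [Real.arccos_nonneg μ])
    set B1 := Real.sin ρ with hB1
    have hB1pos : 0 < B1 := Real.sin_pos_of_pos_of_lt_pi hρpos hρpi
    have hden : 0 < B1 + A1 := by linarith
    set t := A1 / (B1 + A1) with htdef
    have ht0 : 0 < t := div_pos hA1pos hden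
    have ht1 : t < 1 := by rw [htdef, div_lt_one hden]; linarith
    have h1t : 1 - t = B1 / (B1 + A1) := by
      rw [htdef]
      field_simp
      ring
    set lam := Real.sin s / (B1 + A1) with hlam
    have hlampos : 0 < lam := div_pos hsins hden
    have e1 : A1 + B1 * Real.cos s = Real.sin s * μ := by
      rw [hA1, hB1, Real.sin_sub, ← hcosρ]
      ring
    have e2 : B1 * Real.sin s = Real.sin s * Real.sqrt (1 - μ ^ 2) := by
      rw [hsinρ]
      ring
    have hkey : A1 • k + B1 • xs = Real.sin s • q := by
      calc A1 • k + B1 • xs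
          = (A1 + B1 * Real.cos s) • k + (B1 * Real.sin s) • u := by rw [hxs]; module
      _ = (Real.sin s * μ) • k + (Real.sin s * Real.sqrt (1 - μ ^ 2)) • u := by
          rw [e1, e2]
      _ = Real.sin s • q := by rw [hqu]; module
    have hsym : t • k + (1 - t) • xs = lam • q := by
      rw [htdef, h1t, hlam, div_eq_inv_mul, div_eq_inv_mul, div_eq_inv_mul]
      have h2 := congrArg (fun v : E d => (B1 + A1)⁻¹ • v) hkey
      simp only [smul_add, smul_smul] at h2
      exact h2
    have hqint : q ∈ sInterior C := by
      have hseg := segment_mem_sInterior hC hxsC hkI ht0 ht1.le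
      rwa [hsym, nrm_smul_pos hlampos hq1] at hseg
    exact hqNI.2 hqint
  have hA0 : (0:ℝ) ∈ {r : ℝ | 0 ≤ r ∧ sBall k r ⊆ C} := by
    refine ⟨le_rfl, ?_⟩
    rintro x ⟨hxS, hxd⟩
    have hx1 : ‖x‖ = 1 := mem_Sph_iff.mp hxS
    have h1 : sdist k x = 0 := le_antisymm hxd (Real.arccos_nonneg _)
    have h2 : (⟪k, x⟫ : ℝ) = 1 := by
      have := cos_sdist hk hx1
      rw [h1, Real.cos_zero] at this
      exact this.symm
    rw [← eq_of_inner_eq_one hk hx1 h2]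
    exact sInterior_subset hkI
  have hmemlt : ∀ r : ℝ, 0 ≤ r → r < ρ → r ∈ {r : ℝ | 0 ≤ r ∧ sBall k r ⊆ C} := by
    intro r h0 hlt
    refine ⟨h0, ?_⟩
    rintro x ⟨hxS, hxd⟩
    have hx1 : ‖x‖ = 1 := mem_Sph_iff.mp hxS
    have hgt : μ < ⟪k, x⟫ := by
      by_contra hle
      push_neg at hle
      have h3 := arccos_le_arccos' hle
      have h4 : Real.arccos ⟪k, x⟫ ≤ r := hxd
      rw [hρ] at hlt
      linarith
    exact hballC x hx1 hgt
  have hssup : sSup {r : ℝ | 0 ≤ r ∧ sBall k r ⊆ C} = ρ := by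
    apply le_antisymm (csSup_le ⟨0, hA0⟩ hAub)
    by_contra hlt
    push_neg at hlt
    have h0sup : (0:ℝ) ≤ sSup {r : ℝ | 0 ≤ r ∧ sBall k r ⊆ C} :=
      le_csSup ⟨ρ, hAub⟩ hA0
    set r := (sSup {r : ℝ | 0 ≤ r ∧ sBall k r ⊆ C} + ρ) / 2 with hr
    have hrA := hmemlt r (by rw [hr]; linarith) (by rw [hr]; linarith)
    have := le_csSup ⟨ρ, hAub⟩ hrA
    rw [hr] at this
    linarith
  rw [hssup]
  obtain ⟨k', hk'S, hk'q, hk'hemi⟩ := exists_support hC hqC hqNI.2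
  have hk'1 : ‖k'‖ = 1 := mem_Sph_iff.mp hk'S
  have hk'k : k' ≠ k := by
    intro h
    rw [h, ← hμ] at hk'q
    linarith
  have hk'nk : k' ≠ -k := by
    intro h
    rw [h, inner_neg_left, ← hμ] at hk'q
    linarith
  have hlb := inner_ge_of_ball hk hk'1 hk'k hk'nk hμ0 hμ1 hballC hk'hemi
  have hub : (⟪k, k'⟫ : ℝ) ≤ Real.sqrt (1 - μ ^ 2) := by
    have hg := gram_ineq hk hk'1 hq1
    rw [hk'q, ← hμ, mul_zero, sub_zero] at hg
    have h1 : (1 - μ ^ 2) * (1 - (0:ℝ) ^ 2) = 1 - μ ^ 2 := by ring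
    rw [h1] at hg
    exact le_trans (le_abs_self _) hg
  have hkk' : (⟪k, k'⟫ : ℝ) = Real.sqrt (1 - μ ^ 2) := le_antisymm hub hlb
  have harc : Real.arccos (Real.sqrt (1 - μ ^ 2)) = Real.pi / 2 - ρ := by
    rw [hρ]
    exact arccos_sqrt_one_sub_sq hμ0 hμ1.le
  apply width_eq_of
  · exact ⟨k', hk'S, hk'k, hk'nk, ⟨hk'hemi, ⟨q, ⟨mem_Sph_iff.mpr hq1, hk'q⟩, hqC⟩⟩,
      by rw [lthick, sdist, hkk', harc]; ring⟩
  · rintro k'' hk''S hne hne' ⟨hhemi'', htouch''⟩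
    have hlb'' := inner_ge_of_ball hk (mem_Sph_iff.mp hk''S) hne hne' hμ0 hμ1 hballC hhemi''
    have h2 : Real.arccos ⟪k, k''⟫ ≤ Real.pi / 2 - ρ := by
      calc Real.arccos ⟪k, k''⟫ ≤ Real.arccos (Real.sqrt (1 - μ ^ 2)) :=
            arccos_le_arccos' hlb''
      _ = Real.pi / 2 - ρ := harc
    rw [lthick, sdist]
    linarith
end Main

/-- the width of a convex body determined by a supporting
hemisphere, in terms of the radii of concentric balls touching the body. -/
theorem stmt8 {d : ℕ} (C : Set (E d)) (hC : IsBody C)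
    (k : E d) (hk : k ∈ Sph d) (hsup : Supports k C) :
    (k ∉ C → width C k =
        Real.pi / 2 - sSup {r : ℝ | 0 ≤ r ∧ Disjoint (sBall k r) (sInterior C)}) ∧
    (k ∈ C \ sInterior C → width C k = Real.pi / 2) ∧
    (k ∈ sInterior C → width C k =
        Real.pi / 2 + sSup {r : ℝ | 0 ≤ r ∧ sBall k r ⊆ C}) :=
  ⟨fun h => case1 hC hk hsup h, fun h => case2 hC hk hsup h,
    fun h => case3 hC hk hsup h⟩
end
end

section
/- Let G and H be distinct non-opposite hemispheres of S^d, with g the center of G. If g ∉ bd(H), let B be the ball centered at g which touches bd(H) (from inside or outside of H) and let t be the point of touching; if g ∈ bd(H), put t = g. Then t is the center of the (d−1)-dimensional hemisphere H/G = bd(H) ∩ G. -/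
open Set Metric
open scoped RealInnerProductSpace

noncomputable section

variable {d : ℕ}

/-- the point of `bd(H)` nearest to the center `g` of `G` (the
touching point of the ball centered at `g` touching `bd(H)`, or `g` itself if
`g ∈ bd(H)`) is the center of the `(d-1)`-dimensional hemisphere
`H/G = bd(H) ∩ G`. -/
theorem stmt9 {d : ℕ} (g h : E d) (hg : g ∈ Sph d) (hh : h ∈ Sph d)
    (hne : g ≠ h) (hno : g ≠ -h)
    (t : E d) (ht : t ∈ bdHemi h) (hmin : ∀ x ∈ bdHemi h, sdist g t ≤ sdist g x) :
    t = cGH h g := by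
  have hgn : ‖g‖ = 1 := by simpa [Sph] using hg
  have hhn : ‖h‖ = 1 := by simpa [Sph] using hh
  have htn : ‖t‖ = 1 := by simpa [Sph, bdHemi] using ht.1
  have htperp : ⟪h, t⟫ = 0 := ht.2
  have hhh : ⟪h, h⟫ = 1 := by
    rw [real_inner_self_eq_norm_sq, hhn]; norm_num
  set v : E d := g - ⟪h, g⟫ • h with hv
  have hhv : ⟪h, v⟫ = 0 := by
    rw [hv, inner_sub_right, real_inner_smul_right, hhh]; ring
  have hgv : ⟪g, v⟫ = ‖v‖ ^ 2 := by
    have h1 : ⟪v, v⟫ = ⟪g, v⟫ - ⟪h, g⟫ * ⟪h, v⟫ := by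
      rw [hv, inner_sub_left, real_inner_smul_left]
    rw [real_inner_self_eq_norm_sq, hhv] at h1
    linarith
  have hv0 : v ≠ 0 := by
    intro h0
    have hge : g = ⟪h, g⟫ • h := by
      have h1 := sub_eq_zero.mp (hv ▸ h0 : g - ⟪h, g⟫ • h = 0)
      exact h1
    have habs : |⟪h, g⟫| = 1 := by
      have h2 := congrArg norm hge
      rw [norm_smul, hhn, mul_one, Real.norm_eq_abs, hgn] at h2
      exact h2.symm
    rcases (abs_eq (by norm_num : (0:ℝ) ≤ 1)).mp habs with hc | hc
    · exact hne (by rw [hge, hc, one_smul])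
    · exact hno (by rw [hge, hc, neg_one_smul])
  have hvpos : 0 < ‖v‖ := norm_pos_iff.mpr hv0
  have hvle1 : ‖v‖ ≤ 1 := by
    have h1 : ⟪g, v⟫ ≤ ‖g‖ * ‖v‖ := real_inner_le_norm g v
    rw [hgv, hgn, one_mul] at h1
    nlinarith
  have hcn : ‖nrm v‖ = 1 := by
    rw [nrm, norm_smul, norm_inv, norm_norm, inv_mul_cancel₀ (ne_of_gt hvpos)]
  have hmem : nrm v ∈ bdHemi h := by
    refine ⟨by simpa [Sph] using hcn, ?_⟩
    show ⟪h, nrm v⟫ = 0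
    rw [nrm, real_inner_smul_right, hhv, mul_zero]
  have hgnrm : ⟪g, nrm v⟫ = ‖v‖ := by
    rw [nrm, real_inner_smul_right, hgv]
    field_simp
  have hgteqvt : ⟪g, t⟫ = ⟪v, t⟫ := by
    rw [hv, inner_sub_left, real_inner_smul_left, htperp]
    ring
  have hgt_le : ⟪g, t⟫ ≤ ‖v‖ := by
    have h2 : ⟪v, t⟫ ≤ ‖v‖ * ‖t‖ := real_inner_le_norm v t
    rw [htn, mul_one] at h2
    linarith [hgteqvt]
  have habs2 : |⟪g, t⟫| ≤ 1 := by
    have h3 := abs_real_inner_le_norm g t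
    rw [hgn, htn, mul_one] at h3
    exact h3
  have hgt_mem : ⟪g, t⟫ ∈ Set.Icc (-1 : ℝ) 1 :=
    ⟨(abs_le.mp habs2).1, (abs_le.mp habs2).2⟩
  have hv_mem : ‖v‖ ∈ Set.Icc (-1 : ℝ) 1 := ⟨by linarith, hvle1⟩
  have hge2 : ‖v‖ ≤ ⟪g, t⟫ := by
    by_contra hlt
    push_neg at hlt
    have h4 := Real.strictAntiOn_arccos hgt_mem hv_mem hlt
    have hm := hmin (nrm v) hmem
    rw [sdist, sdist, hgnrm] at hm
    linarith
  have heq : ⟪v, t⟫ = ‖v‖ * ‖t‖ := by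
    rw [htn, mul_one]
    linarith [hgteqvt]
  have hvt : ‖t‖ • v = ‖v‖ • t := inner_eq_norm_mul_iff_real.mp heq
  rw [htn, one_smul] at hvt
  have hfin : (‖v‖)⁻¹ • v = t := by
    have h5 := congrArg (fun w => (‖v‖)⁻¹ • w) hvt
    rw [smul_smul, inv_mul_cancel₀ (ne_of_gt hvpos), one_smul] at h5
    exact h5
  rw [← hfin]
  rfl
end
end
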